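/- arXiv:2203.03229 — 4 statements merged into one kernel-verified Lean document; each statement's English description precedes it below -/
import Mathlib

section
/- Let G be a connected graph, let C ⊆ V(G) be such that G[C] is connected and there is a vertex v_C ∈ C with d_{G[C]}(v_C, w) ≤ k for every w ∈ C. If W ⊆ C satisfies |W| > k·s^k, then G[C] contains a subdivision of the star K_{1,s} with all its leaf vertices in W. -/
open SimpleGraph

/-- `G` contains, inside the vertex set `C`, a subdivision of the star `K_{1,s}` with all
its `s` leaves in `W`: a center `z` and `s` nontrivial paths from `z` to distinct vertices
of `W`, pairwise sharing only the center, all of whose vertices lie in `C`. -/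
def StarSubdivisionIn {V : Type*} (G : SimpleGraph V) (C W : Set V) (s : ℕ) : Prop :=
  ∃ z ∈ C, ∃ w : Fin s → V, Function.Injective w ∧ (∀ i, w i ∈ W) ∧ (∀ i, w i ≠ z) ∧
    ∃ p : (i : Fin s) → G.Walk z (w i),
      (∀ i, (p i).IsPath ∧ ∀ x ∈ (p i).support, x ∈ C) ∧
      (∀ i j, i ≠ j → ∀ x ∈ (p i).support, x ∈ (p j).support → x = z)

namespace StarAux

variable {α : Type*} (H : SimpleGraph α) (v₀ : α)

lemma exists_parent (hc : H.Connected) {x : α} (hx : x ≠ v₀) :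
    ∃ y, H.Adj y x ∧ H.dist v₀ y + 1 = H.dist v₀ x := by
  have hd0 : 0 < H.dist v₀ x := hc.pos_dist_of_ne (Ne.symm hx)
  obtain ⟨p, hp⟩ := (hc v₀ x).exists_walk_length_eq_dist
  have hnn : ¬ p.reverse.Nil := by
    rw [Walk.not_nil_iff_lt_length, Walk.length_reverse, hp]; exact hd0
  obtain ⟨y, h, q, hpr⟩ := Walk.not_nil_iff.mp hnn
  refine ⟨y, h.symm, ?_⟩
  have hlen : q.length + 1 = H.dist v₀ x := by
    have := congrArg Walk.length hpr
    rw [Walk.length_reverse, hp] at this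
    simpa using this.symm
  have h1 : H.dist v₀ y ≤ q.length := by
    simpa using H.dist_le q.reverse
  have h2 : H.dist v₀ x ≤ H.dist v₀ y + 1 := by
    calc H.dist v₀ x ≤ H.dist v₀ y + H.dist y x := hc.dist_triangle
    _ ≤ H.dist v₀ y + 1 := by
        have h3 : H.dist y x ≤ 1 := by simpa using H.dist_le h.symm.toWalk
        omega
  omega

open Classical in
noncomputable def par (hc : H.Connected) (x : α) : α :=
  if h : x = v₀ then v₀ else (exists_parent H v₀ hc h).choose

variable (hc : H.Connected)

lemma par_adj {x : α} (hx : x ≠ v₀) : H.Adj (par H v₀ hc x) x := by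
  rw [par, dif_neg hx]; exact (exists_parent H v₀ hc hx).choose_spec.1

lemma par_dist {x : α} (hx : x ≠ v₀) :
    H.dist v₀ (par H v₀ hc x) + 1 = H.dist v₀ x := by
  rw [par, dif_neg hx]; exact (exists_parent H v₀ hc hx).choose_spec.2

open Classical in
noncomputable def trail (hc : H.Connected) (x : α) : H.Walk v₀ x :=
  if h : x = v₀ then (Walk.nil.copy rfl h.symm) else
    ((trail hc (par H v₀ hc x)).concat (par_adj H v₀ hc h))
  termination_by H.dist v₀ x
  decreasing_by
    have := par_dist H v₀ hc h
    omega

lemma trail_of_ne {x : α} (hx : x ≠ v₀) :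
    trail H v₀ hc x = (trail H v₀ hc (par H v₀ hc x)).concat (par_adj H v₀ hc hx) := by
  rw [trail, dif_neg hx]

lemma trail_nil : trail H v₀ hc v₀ = Walk.nil.copy rfl rfl := by
  rw [trail, dif_pos rfl]

/-- custom induction principle following parent pointers -/
lemma trail_ind (P : α → Prop) (h0 : P v₀)
    (hs : ∀ x, x ≠ v₀ → P (par H v₀ hc x) → P x) : ∀ x, P x := by
  suffices h : ∀ n x, H.dist v₀ x ≤ n → P x from fun x => h _ x le_rfl
  intro n
  induction n with
  | zero =>
      intro x hx
      rcases eq_or_ne x v₀ with rfl | hne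
      · exact h0
      · have := par_dist H v₀ hc hne; omega
  | succ n ih =>
      intro x hx
      rcases eq_or_ne x v₀ with rfl | hne
      · exact h0
      · have := par_dist H v₀ hc hne
        exact hs x hne (ih _ (by omega))

lemma length_trail (x : α) : (trail H v₀ hc x).length = H.dist v₀ x := by
  induction x using trail_ind H v₀ hc with
  | h0 => simp [trail_nil, SimpleGraph.dist_self]
  | hs x hx ih =>
      rw [trail_of_ne H v₀ hc hx]
      have := par_dist H v₀ hc hx
      simp [Walk.length_concat, ih, this]


lemma mem_support_concat {u v w y : α} {p : H.Walk u v} {h : H.Adj v w} :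
    y ∈ (p.concat h).support ↔ y ∈ p.support ∨ y = w := by
  rw [Walk.support_concat]
  simp

lemma dist_le_of_mem_trail {x u : α} (hu : u ∈ (trail H v₀ hc x).support) :
    H.dist v₀ u ≤ H.dist v₀ x := by
  induction x using trail_ind H v₀ hc with
  | h0 =>
      rw [trail_nil] at hu
      simp at hu
      simp [hu]
  | hs x hx ih =>
      rw [trail_of_ne H v₀ hc hx, mem_support_concat] at hu
      have hd := par_dist H v₀ hc hx
      rcases hu with h | h
      · exact le_trans (ih h) (by omega)
      · simp [h]

lemma trail_prefix {x u : α} (hu : u ∈ (trail H v₀ hc x).support) :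
    ∃ r : H.Walk u x, trail H v₀ hc x = (trail H v₀ hc u).append r := by
  induction x using trail_ind H v₀ hc with
  | h0 =>
      rw [trail_nil] at hu
      simp at hu
      subst hu
      exact ⟨Walk.nil, by simp⟩
  | hs x hx ih =>
      rcases eq_or_ne u x with rfl | hux
      · exact ⟨Walk.nil, by simp⟩
      · rw [trail_of_ne H v₀ hc hx, mem_support_concat] at hu
        rcases hu with h | h
        · obtain ⟨r, hr⟩ := ih h
          refine ⟨r.concat (par_adj H v₀ hc hx), ?_⟩
          rw [trail_of_ne H v₀ hc hx, hr, Walk.append_concat]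
        · exact absurd h hux

lemma isPath_trail (x : α) : (trail H v₀ hc x).IsPath := by
  induction x using trail_ind H v₀ hc with
  | h0 => rw [trail_nil]; simp
  | hs x hx ih =>
      rw [trail_of_ne H v₀ hc hx]
      rw [Walk.isPath_def, Walk.support_concat,
        List.nodup_append']
      refine ⟨ih.support_nodup, List.nodup_singleton x, fun a ha hax => ?_⟩
      simp only [List.mem_singleton] at hax
      subst hax
      have := dist_le_of_mem_trail H v₀ hc ha
      have := par_dist H v₀ hc hx
      omega

lemma eq_of_mem_trail_dist_eq {x u : α} (hu : u ∈ (trail H v₀ hc x).support)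
    (hd : H.dist v₀ u = H.dist v₀ x) : u = x := by
  obtain ⟨r, hr⟩ := trail_prefix H v₀ hc hu
  have hlen := congrArg Walk.length hr
  rw [Walk.length_append, length_trail, length_trail] at hlen
  have : r.length = 0 := by omega
  exact Walk.eq_of_length_eq_zero this

lemma mem_trail_of_dist_le {x u w : α} (hu : u ∈ (trail H v₀ hc x).support)
    (hw : w ∈ (trail H v₀ hc x).support) (hd : H.dist v₀ u ≤ H.dist v₀ w) :
    u ∈ (trail H v₀ hc w).support := by
  induction x using trail_ind H v₀ hc with
  | h0 =>
      rw [trail_nil] at hu hw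
      simp at hu hw
      subst hu; subst hw
      exact Walk.start_mem_support _
  | hs x hx ih =>
      rcases eq_or_ne w x with rfl | hwx
      · exact hu
      · rw [trail_of_ne H v₀ hc hx, mem_support_concat] at hu hw
        have hw' : w ∈ (trail H v₀ hc (par H v₀ hc x)).support := by
          rcases hw with h | h
          · exact h
          · exact absurd h hwx
        rcases hu with h | h
        · exact ih h hw'
        · exfalso
          subst h
          have h1 := dist_le_of_mem_trail H v₀ hc hw'
          have h2 := par_dist H v₀ hc hx
          omega

lemma mem_trail_trans {x u w : α} (hu : u ∈ (trail H v₀ hc w).support)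
    (hw : w ∈ (trail H v₀ hc x).support) : u ∈ (trail H v₀ hc x).support := by
  obtain ⟨r, hr⟩ := trail_prefix H v₀ hc hw
  rw [hr, Walk.mem_support_append_iff]
  exact Or.inl hu

lemma exists_mem_trail_dist_eq {x : α} :
    ∀ j ≤ H.dist v₀ x, ∃ u ∈ (trail H v₀ hc x).support, H.dist v₀ u = j := by
  induction x using trail_ind H v₀ hc with
  | h0 =>
      intro j hj
      rw [SimpleGraph.dist_self] at hj
      interval_cases j
      exact ⟨v₀, Walk.start_mem_support _, SimpleGraph.dist_self⟩
  | hs x hx ih =>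
      intro j hj
      have hd := par_dist H v₀ hc hx
      rcases eq_or_lt_of_le hj with rfl | hlt
      · exact ⟨x, Walk.end_mem_support _, rfl⟩
      · obtain ⟨u, hmem, hdu⟩ := ih j (by omega)
        refine ⟨u, ?_, hdu⟩
        rw [trail_of_ne H v₀ hc hx, mem_support_concat]
        exact Or.inl hmem

lemma suffix_dist_ge {x z u : α} (hz : z ∈ (trail H v₀ hc x).support)
    (r : H.Walk z x) (hr : trail H v₀ hc x = (trail H v₀ hc z).append r)
    (hu : u ∈ r.support) :
    H.dist v₀ z ≤ H.dist v₀ u ∧ u ∈ (trail H v₀ hc x).support := by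
  have hux : u ∈ (trail H v₀ hc x).support := by
    rw [hr, Walk.mem_support_append_iff]; exact Or.inr hu
  refine ⟨?_, hux⟩
  by_contra hlt
  push_neg at hlt
  have huz : u ∈ (trail H v₀ hc z).support :=
    mem_trail_of_dist_le H v₀ hc hux hz (le_of_lt hlt)
  have hne : u ≠ z := by
    intro h; subst h; omega
  have hutail : u ∈ r.support.tail := by
    have : r.support = z :: r.support.tail := by
      rw [← Walk.support_eq_cons]
    rcases (by rw [this] at hu; exact hu : u ∈ z :: r.support.tail) with _ | h
    · exact absurd rfl hne
    · assumption
  have hnodup := (isPath_trail H v₀ hc x).support_nodup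
  rw [hr, Walk.support_append] at hnodup
  exact (List.disjoint_of_nodup_append hnodup) huz hutail


open Classical in
noncomputable def cmap (z : α) (x : α) : α :=
  if h : H.dist v₀ z + 1 ≤ H.dist v₀ x then
    (exists_mem_trail_dist_eq H v₀ hc (H.dist v₀ z + 1) h).choose else x

lemma cmap_spec {z x : α} (h : H.dist v₀ z + 1 ≤ H.dist v₀ x) :
    cmap H v₀ hc z x ∈ (trail H v₀ hc x).support ∧
      H.dist v₀ (cmap H v₀ hc z x) = H.dist v₀ z + 1 := by
  rw [cmap, dif_pos h]
  exact (exists_mem_trail_dist_eq H v₀ hc (H.dist v₀ z + 1) h).choose_spec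

lemma dist_succ_le_of_mem_trail_ne {z w : α} (hz : z ∈ (trail H v₀ hc w).support)
    (hne : w ≠ z) : H.dist v₀ z + 1 ≤ H.dist v₀ w := by
  have h1 := dist_le_of_mem_trail H v₀ hc hz
  rcases eq_or_lt_of_le h1 with h | h
  · exact absurd (eq_of_mem_trail_dist_eq H v₀ hc hz h).symm hne
  · omega

lemma caseOne [DecidableEq α] {s : ℕ} (z : α) (Wf : Finset α)
    (hWf : ∀ w ∈ Wf, z ∈ (trail H v₀ hc w).support ∧ w ≠ z)
    (himg : s ≤ (Wf.image (cmap H v₀ hc z)).card) :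
    ∃ z', ∃ w : Fin s → α, Function.Injective w ∧ (∀ i, w i ∈ Wf) ∧ (∀ i, w i ≠ z') ∧
      ∃ p : (i : Fin s) → H.Walk z' (w i), (∀ i, (p i).IsPath) ∧
        (∀ i j, i ≠ j → ∀ x ∈ (p i).support, x ∈ (p j).support → x = z') := by
  obtain ⟨S, hS_sub, hS_card⟩ := Finset.exists_subset_card_eq himg
  set e := Finset.equivFinOfCardEq hS_card with he
  set c : Fin s → α := fun i => (e.symm i : α) with hcdef
  have hc_inj : Function.Injective c := fun i j hij => by
    apply e.symm.injective; exact Subtype.ext hij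
  have hc_mem : ∀ i, c i ∈ S := fun i => (e.symm i).2
  have hwit : ∀ i, ∃ w, w ∈ Wf ∧ cmap H v₀ hc z w = c i := by
    intro i
    have := hS_sub (hc_mem i)
    rw [Finset.mem_image] at this
    obtain ⟨w, hw, hcw⟩ := this
    exact ⟨w, hw, hcw⟩
  choose w hwWf hwc using hwit
  have hkey : ∀ i, z ∈ (trail H v₀ hc (w i)).support ∧ w i ≠ z := fun i => hWf _ (hwWf i)
  have hle : ∀ i, H.dist v₀ z + 1 ≤ H.dist v₀ (w i) := fun i =>
    dist_succ_le_of_mem_trail_ne H v₀ hc (hkey i).1 (hkey i).2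
  have hw_inj : Function.Injective w := by
    intro i j hij
    apply hc_inj
    rw [← hwc i, ← hwc j, hij]
  choose p hp using fun i => trail_prefix H v₀ hc (hkey i).1
  refine ⟨z, w, hw_inj, hwWf, fun i => (hkey i).2, p, ?_, ?_⟩
  · intro i
    have := isPath_trail H v₀ hc (w i)
    rw [hp i] at this
    exact this.of_append_right
  · intro i j hij x hxi hxj
    by_contra hxz
    -- x is on both suffixes; its branch vertex at depth d z + 1 equals both c i and c j
    have hi := suffix_dist_ge H v₀ hc (hkey i).1 (p i) (hp i) hxi
    have hj := suffix_dist_ge H v₀ hc (hkey j).1 (p j) (hp j) hxj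
    have hzx : z ∈ (trail H v₀ hc x).support := by
      have hzi : z ∈ (trail H v₀ hc (w i)).support := (hkey i).1
      exact mem_trail_of_dist_le H v₀ hc hzi hi.2 hi.1
    have hxz' : H.dist v₀ z + 1 ≤ H.dist v₀ x :=
      dist_succ_le_of_mem_trail_ne H v₀ hc hzx hxz
    obtain ⟨u, hu_mem, hu_d⟩ := exists_mem_trail_dist_eq H v₀ hc (H.dist v₀ z + 1) hxz'
    -- u is on trail (w i) and trail (w j)
    have hui : u ∈ (trail H v₀ hc (w i)).support := mem_trail_trans H v₀ hc hu_mem hi.2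
    have huj : u ∈ (trail H v₀ hc (w j)).support := mem_trail_trans H v₀ hc hu_mem hj.2
    -- u equals cmap z (w i) and cmap z (w j)
    have hci := cmap_spec H v₀ hc (hle i)
    have hcj := cmap_spec H v₀ hc (hle j)
    have hui' : u ∈ (trail H v₀ hc (cmap H v₀ hc z (w i))).support :=
      mem_trail_of_dist_le H v₀ hc hui hci.1 (by omega)
    have huj' : u ∈ (trail H v₀ hc (cmap H v₀ hc z (w j))).support :=
      mem_trail_of_dist_le H v₀ hc huj hcj.1 (by omega)
    have hueqi : u = cmap H v₀ hc z (w i) :=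
      eq_of_mem_trail_dist_eq H v₀ hc hui' (by omega)
    have hueqj : u = cmap H v₀ hc z (w j) :=
      eq_of_mem_trail_dist_eq H v₀ hc huj' (by omega)
    have : c i = c j := by rw [← hwc i, ← hwc j, ← hueqi, ← hueqj]
    exact hij (hc_inj this)


lemma key [DecidableEq α] {s : ℕ} (hs : 1 ≤ s) :
    ∀ k, 1 ≤ k → ∀ (z : α) (Wf : Finset α),
      (∀ w ∈ Wf, z ∈ (trail H v₀ hc w).support ∧ w ≠ z ∧
        H.dist v₀ w ≤ H.dist v₀ z + k) →
      k * s ^ k ≤ Wf.card →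
      ∃ z', ∃ w : Fin s → α, Function.Injective w ∧ (∀ i, w i ∈ Wf) ∧ (∀ i, w i ≠ z') ∧
        ∃ p : (i : Fin s) → H.Walk z' (w i), (∀ i, (p i).IsPath) ∧
          (∀ i j, i ≠ j → ∀ x ∈ (p i).support, x ∈ (p j).support → x = z') := by
  intro k
  induction k with
  | zero => intro h; exact absurd h (by omega)
  | succ k ih =>
    intro _ z Wf hWf hcard
    by_cases hbig : s ≤ (Wf.image (cmap H v₀ hc z)).card
    · exact caseOne H v₀ hc z Wf (fun w hw => ⟨(hWf w hw).1, (hWf w hw).2.1⟩) hbig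
    · push_neg at hbig
      rcases Nat.eq_zero_or_pos k with rfl | hk1
      · exfalso
        have hsub : Wf ⊆ Wf.image (cmap H v₀ hc z) := by
          intro w hw
          obtain ⟨h1, h2, h3⟩ := hWf w hw
          have hle := dist_succ_le_of_mem_trail_ne H v₀ hc h1 h2
          have hspec := cmap_spec H v₀ hc (z := z) (x := w) hle
          have hcw : cmap H v₀ hc z w = w :=
            eq_of_mem_trail_dist_eq H v₀ hc hspec.1 (by omega)
          rw [← hcw]
          exact Finset.mem_image_of_mem _ hw
        have h4 := Finset.card_le_card hsub
        have h5 : s ≤ Wf.card := by simpa using hcard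
        omega
      · have hmaps : ∀ w ∈ Wf, cmap H v₀ hc z w ∈ Wf.image (cmap H v₀ hc z) :=
          fun w hw => Finset.mem_image_of_mem _ hw
        have hpow : 0 < s ^ k := Nat.pow_pos hs
        have hineq : (Wf.image (cmap H v₀ hc z)).card * (k * s ^ k) < Wf.card := by
          have h1 : (Wf.image (cmap H v₀ hc z)).card * (k * s ^ k) ≤ k * (s ^ k * s) := by
            calc (Wf.image (cmap H v₀ hc z)).card * (k * s ^ k)
                ≤ s * (k * s ^ k) := Nat.mul_le_mul_right _ (by omega)
              _ = k * (s ^ k * s) := by ring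
          have h2 : k * (s ^ k * s) < (k + 1) * (s ^ k * s) := by
            have hpos : 0 < s ^ k * s := by positivity
            exact Nat.mul_lt_mul_of_lt_of_le (by omega) le_rfl hpos
          have h3 : (k + 1) * (s ^ k * s) ≤ Wf.card := by
            rw [← pow_succ]; exact hcard
          omega
        obtain ⟨c, hcmem, hfib⟩ :=
          Finset.exists_lt_card_fiber_of_mul_lt_card_of_maps_to hmaps hineq
        obtain ⟨w₀, hw₀, hw₀c⟩ := Finset.mem_image.mp hcmem
        have hle₀ := dist_succ_le_of_mem_trail_ne H v₀ hc (hWf w₀ hw₀).1 (hWf w₀ hw₀).2.1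
        have hc_spec := cmap_spec H v₀ hc (z := z) (x := w₀) hle₀
        have hdc : H.dist v₀ c = H.dist v₀ z + 1 := by rw [← hw₀c]; exact hc_spec.2
        set F := Wf.filter (fun w => cmap H v₀ hc z w = c) with hF
        set Wf' := F.erase c with hWf'
        have hWf'h : ∀ w ∈ Wf', c ∈ (trail H v₀ hc w).support ∧ w ≠ c ∧
            H.dist v₀ w ≤ H.dist v₀ c + k := by
          intro w hw
          have hwne : w ≠ c := Finset.ne_of_mem_erase hw
          have hwF : w ∈ F := Finset.mem_of_mem_erase hw
          rw [hF, Finset.mem_filter] at hwF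
          obtain ⟨hwWf, hwcm⟩ := hwF
          obtain ⟨h1, h2, h3⟩ := hWf w hwWf
          have hlew := dist_succ_le_of_mem_trail_ne H v₀ hc h1 h2
          have hspecw := cmap_spec H v₀ hc (z := z) (x := w) hlew
          refine ⟨?_, hwne, by omega⟩
          rw [← hwcm]; exact hspecw.1
        have hcard' : k * s ^ k ≤ Wf'.card := by
          rw [hWf']
          have h6 := Finset.pred_card_le_card_erase (s := F) (a := c)
          have h7 : k * s ^ k < F.card := hfib
          omega
        obtain ⟨z', w, hinj, hmem, hne, p, hp1, hp2⟩ := ih hk1 c Wf' hWf'h hcard'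
        refine ⟨z', w, hinj, fun i => ?_, hne, p, hp1, hp2⟩
        have := hmem i
        rw [hWf'] at this
        have := Finset.mem_of_mem_erase this
        rw [hF, Finset.mem_filter] at this
        exact this.1


lemma lift_walk {V : Type*} (G : SimpleGraph V) (C : Set V) :
    ∀ {a b : V} (p : G.Walk a b) (ha : a ∈ C) (hb : b ∈ C),
      (∀ x ∈ p.support, x ∈ C) →
      ∃ q : (G.induce C).Walk ⟨a, ha⟩ ⟨b, hb⟩, q.length = p.length := by
  intro a b p
  induction p with
  | nil => intro ha hb _; exact ⟨Walk.nil, rfl⟩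
  | @cons u v w h q ih =>
      intro ha hb hsup
      have hv : v ∈ C := hsup v (by simp)
      obtain ⟨q', hq'⟩ := ih hv hb (fun x hx => hsup x (by simp [hx]))
      refine ⟨Walk.cons (by simpa using h) q', by simp [hq']⟩

end StarAux

open StarAux in
/-- If `G[C]` is connected with a vertex `v_C` within distance `k` of every vertex of `C`
(inside `G[C]`), and `W ⊆ C` has more than `k·s^k` vertices, then `G[C]` contains a
subdivision of `K_{1,s}` with all leaves in `W`. -/
theorem star_subdivision_of_large_set {V : Type*} [Fintype V]
    (G : SimpleGraph V) (k s : ℕ) (hk : 1 ≤ k) (hs : 1 ≤ s)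
    (C : Set V) (hconn : (G.induce C).Connected)
    (vC : V) (hvC : vC ∈ C)
    (hrad : ∀ w ∈ C, ∃ p : G.Walk vC w, p.length ≤ k ∧ ∀ x ∈ p.support, x ∈ C)
    (W : Set V) (hWC : W ⊆ C) (hW : k * s ^ k < W.ncard) :
    StarSubdivisionIn G C W s := by
  classical
  haveI : Fintype ↥C := Fintype.ofFinite _
  haveI : Fintype ↥W := Fintype.ofFinite _
  set H : SimpleGraph ↥C := G.induce C with hH
  set v₀ : ↥C := ⟨vC, hvC⟩ with hv₀
  set Wf0 : Finset ↥C := Finset.univ.filter (fun x : ↥C => ↑x ∈ W) with hWf0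
  have hcard0 : Wf0.card = W.ncard := by
    rw [Set.ncard_eq_toFinset_card']
    refine Finset.card_bij (fun x _ => ↑x) ?_ ?_ ?_
    · intro a ha
      rw [hWf0, Finset.mem_filter] at ha
      simpa using ha.2
    · intro a _ b _ hab
      exact Subtype.ext hab
    · intro b hb
      rw [Set.mem_toFinset] at hb
      exact ⟨⟨b, hWC hb⟩, by simp [hWf0, hb], rfl⟩
  set Wf : Finset ↥C := Wf0.erase v₀ with hWfdef
  have hdk : ∀ w : ↥C, H.dist v₀ w ≤ k := by
    intro w
    obtain ⟨p, hlen, hsup⟩ := hrad ↑w w.2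
    obtain ⟨q, hq⟩ := lift_walk G C p hvC w.2 hsup
    calc H.dist v₀ w ≤ q.length := H.dist_le q
    _ ≤ k := by rw [hq]; exact hlen
  have hhyp : ∀ w ∈ Wf, v₀ ∈ (trail H v₀ hconn w).support ∧ w ≠ v₀ ∧
      H.dist v₀ w ≤ H.dist v₀ v₀ + k := by
    intro w hw
    refine ⟨Walk.start_mem_support _, Finset.ne_of_mem_erase hw, ?_⟩
    rw [SimpleGraph.dist_self]
    simpa using hdk w
  have hcard : k * s ^ k ≤ Wf.card := by
    rw [hWfdef]
    have h1 := Finset.pred_card_le_card_erase (s := Wf0) (a := v₀)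
    omega
  obtain ⟨z', w, hinj, hmem, hne, p, hp1, hp2⟩ :=
    key H v₀ hconn hs k hk v₀ Wf hhyp hcard
  have hmemW : ∀ i, ↑(w i) ∈ W := by
    intro i
    have := Finset.mem_of_mem_erase (hmem i)
    rw [hWf0, Finset.mem_filter] at this
    exact this.2
  refine ⟨↑z', z'.2, fun i => ↑(w i), ?_, hmemW, ?_, ?_⟩
  · intro i j hij
    exact hinj (Subtype.ext hij)
  · intro i h
    exact hne i (Subtype.ext h)
  · refine ⟨fun i => (p i).map (SimpleGraph.Embedding.induce (G := G) C).toHom, ?_, ?_⟩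
    · intro i
      constructor
      · exact Walk.map_isPath_of_injective (SimpleGraph.Embedding.induce (G := G) C).injective (hp1 i)
      · intro x hx
        have hx : x ∈ ((p i).map (SimpleGraph.Embedding.induce (G := G) C).toHom).support := hx
        rw [Walk.support_map] at hx
        obtain ⟨y, _, rfl⟩ := List.mem_map.mp hx
        exact y.2
    · intro i j hij x hxi hxj
      have hxi : x ∈ ((p i).map (SimpleGraph.Embedding.induce (G := G) C).toHom).support := hxi
      have hxj : x ∈ ((p j).map (SimpleGraph.Embedding.induce (G := G) C).toHom).support := hxj
      rw [Walk.support_map] at hxi hxj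
      obtain ⟨yi, hyi, rfl⟩ := List.mem_map.mp hxi
      obtain ⟨yj, hyj, hyeq⟩ := List.mem_map.mp hxj
      have : yj = yi := Subtype.ext hyeq
      subst this
      have := hp2 i j hij yj hyi hyj
      rw [this]
      rfl
end

section
/- Let G be a graph with no K_{2,t} minor (t ≥ 2), and let C, C′ be disjoint vertex subsets such that each of G[C] and G[C′] is connected and has a vertex within distance k (inside the induced subgraph) of all its other vertices. Then the number of edges of G with one endpoint in C and the other in C′ is at most k²·t^{2k·t^k}. -/
open SimpleGraph

def SimpleGraph.HasMinor {V W : Type*} (G : SimpleGraph V) (H : SimpleGraph W) : Prop :=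
  ∃ B : W → Set V,
    (∀ w, (B w).Nonempty) ∧
    (∀ w, (G.induce (B w)).Connected) ∧
    (Pairwise fun w₁ w₂ => Disjoint (B w₁) (B w₂)) ∧
    (∀ w₁ w₂, H.Adj w₁ w₂ → ∃ a ∈ B w₁, ∃ b ∈ B w₂, G.Adj a b)


lemma reachable_induce_of_walk {V : Type*} (G : SimpleGraph V) (B : Set V) :
    ∀ {a b : V} (p : G.Walk a b), (∀ x ∈ p.support, x ∈ B) →
    ∀ (ha : a ∈ B) (hb : b ∈ B), (G.induce B).Reachable ⟨a, ha⟩ ⟨b, hb⟩ := by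
  intro a b p
  induction p with
  | nil => intro _ ha hb; rfl
  | @cons u v w h q ih =>
      intro hsupp ha hb
      have hx : v ∈ B := hsupp v (by simp [SimpleGraph.Walk.support_cons, Walk.start_mem_support])
      refine Reachable.trans ?_ (ih (fun x hx' => hsupp x (by simp [SimpleGraph.Walk.support_cons, hx'])) hx hb)
      exact SimpleGraph.Adj.reachable (by simpa [SimpleGraph.comap] using h)

lemma induce_connected_of_walks {V : Type*} (G : SimpleGraph V) (B : Set V) (c : V) (hc : c ∈ B)
    (h : ∀ w ∈ B, ∃ p : G.Walk c w, ∀ x ∈ p.support, x ∈ B) : (G.induce B).Connected := by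
  rw [SimpleGraph.connected_iff]
  refine ⟨fun a b => ?_, ⟨⟨c, hc⟩⟩⟩
  obtain ⟨pa, hpa⟩ := h a a.2
  obtain ⟨pb, hpb⟩ := h b b.2
  exact ((reachable_induce_of_walk G B pa hpa hc a.2).symm.trans
    (reachable_induce_of_walk G B pb hpb hc b.2))

section Spider
variable {V : Type*} (G : SimpleGraph V)

open Classical in
/-- Length of a shortest walk from `v` to `w` staying inside `D` (0 if none exists). -/
noncomputable def wdist (D : Set V) (v w : V) : ℕ :=
  if h : ∃ n, ∃ p : G.Walk v w, p.length = n ∧ ∀ x ∈ p.support, x ∈ D then Nat.find h else 0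

open Classical in
/-- A parent of `w` in a BFS tree of `D` rooted at `v`. -/
noncomputable def wpar (D : Set V) (v : V) (w : V) : V :=
  if h : ∃ u, u ∈ D ∧ G.Adj u w ∧ wdist G D v w = wdist G D v u + 1 then h.choose else v

variable {D : Set V} {v : V}

lemma wdist_spec {w : V} (h : ∃ p : G.Walk v w, ∀ x ∈ p.support, x ∈ D) :
    ∃ p : G.Walk v w, p.length = wdist G D v w ∧ ∀ x ∈ p.support, x ∈ D := by
  classical
  obtain ⟨p, hp⟩ := h
  have h' : ∃ n, ∃ p : G.Walk v w, p.length = n ∧ ∀ x ∈ p.support, x ∈ D :=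
    ⟨p.length, p, rfl, hp⟩
  rw [wdist, dif_pos h']
  exact Nat.find_spec h'

lemma wdist_le {w : V} (p : G.Walk v w) (hp : ∀ x ∈ p.support, x ∈ D) :
    wdist G D v w ≤ p.length := by
  classical
  have h' : ∃ n, ∃ p : G.Walk v w, p.length = n ∧ ∀ x ∈ p.support, x ∈ D :=
    ⟨p.length, p, rfl, hp⟩
  rw [wdist, dif_pos h']
  exact Nat.find_le ⟨p, rfl, hp⟩

lemma wdist_self (hv : v ∈ D) : wdist G D v v = 0 :=
  Nat.le_zero.mp (by simpa using wdist_le G (Walk.nil : G.Walk v v) (by simp [hv]))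

lemma eq_of_wdist_eq_zero {w : V} (h : ∃ p : G.Walk v w, ∀ x ∈ p.support, x ∈ D)
    (h0 : wdist G D v w = 0) : w = v := by
  obtain ⟨p, hp, -⟩ := wdist_spec G h
  exact (Walk.eq_of_length_eq_zero (p := p) (by omega)).symm

lemma wpar_self : wpar G D v v = v := by
  rw [wpar, dif_neg]
  rintro ⟨u, -, -, h⟩
  by_cases hv : v ∈ D
  · rw [wdist_self G hv] at h; omega
  · have : wdist G D v v = 0 := by
      rw [wdist, dif_neg]
      rintro ⟨n, p, -, hp⟩
      exact hv (hp v p.start_mem_support)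
    rw [this] at h
    exact absurd h.symm (Nat.succ_ne_zero _)

lemma wpar_spec {w : V} (hw : w ∈ D) (hwv : w ≠ v)
    (h : ∃ p : G.Walk v w, ∀ x ∈ p.support, x ∈ D) :
    wpar G D v w ∈ D ∧ G.Adj (wpar G D v w) w ∧
      wdist G D v w = wdist G D v (wpar G D v w) + 1 := by
  classical
  obtain ⟨p, hlen, hp⟩ := wdist_spec G h
  have hpos : p.length ≠ 0 := fun h0 => hwv (Walk.eq_of_length_eq_zero h0).symm
  have hex : ∃ u, u ∈ D ∧ G.Adj u w ∧ wdist G D v w = wdist G D v u + 1 := by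
    cases hrev : p.reverse with
    | nil =>
        exfalso
        have h2 := congrArg Walk.length hrev
        rw [Walk.length_reverse, Walk.length_nil] at h2
        exact hpos h2
    | cons hadj q =>
        rename_i u
        have hqsup : ∀ x ∈ q.support, x ∈ D := by
          intro x hx
          apply hp
          have : x ∈ p.reverse.support := by rw [hrev]; simp [hx]
          simpa [Walk.support_reverse] using this
        have hu : u ∈ D := hqsup u q.start_mem_support
        have hql : q.length = p.length - 1 := by
          have := congrArg Walk.length hrev
          simp at this
          omega
        have h1 : wdist G D v u ≤ p.length - 1 := by
          have := wdist_le G q.reverse (by simpa [Walk.support_reverse] using hqsup)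
          simpa [hql] using this
        obtain ⟨r, hrlen, hr⟩ := wdist_spec G ⟨q.reverse, by simpa [Walk.support_reverse] using hqsup⟩
        have h2 : wdist G D v w ≤ wdist G D v u + 1 := by
          have := wdist_le (D := D) G (r.concat hadj.symm) ?_
          · simpa [Walk.length_concat, hrlen] using this
          · intro x hx
            rw [Walk.support_concat] at hx
            rcases List.mem_append.mp hx with hx | hx
            · exact hr x hx
            · simp at hx; subst hx; exact hw
        exact ⟨u, hu, hadj.symm, by omega⟩
  rw [wpar, dif_pos hex]
  exact hex.choose_spec

lemma wpar_iterate (hD : ∀ w ∈ D, ∃ p : G.Walk v w, ∀ x ∈ p.support, x ∈ D) (hv : v ∈ D)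
    (w : V) (hw : w ∈ D) : ∀ i, i ≤ wdist G D v w →
      (wpar G D v)^[i] w ∈ D ∧ wdist G D v ((wpar G D v)^[i] w) = wdist G D v w - i := by
  intro i
  induction i with
  | zero =>
      intro _
      simp only [Function.iterate_zero_apply, Nat.sub_zero]
      exact ⟨hw, trivial⟩
  | succ i ih =>
      intro hi
      obtain ⟨hmem, hdist⟩ := ih (by omega)
      have hne : (wpar G D v)^[i] w ≠ v := by
        intro he
        rw [he, wdist_self G hv] at hdist
        omega
      obtain ⟨h1, h2, h3⟩ := wpar_spec G hmem hne (hD _ hmem)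
      rw [Function.iterate_succ_apply']
      exact ⟨h1, by omega⟩

lemma wpar_iterate_root (hD : ∀ w ∈ D, ∃ p : G.Walk v w, ∀ x ∈ p.support, x ∈ D) (hv : v ∈ D)
    (w : V) (hw : w ∈ D) : (wpar G D v)^[wdist G D v w] w = v := by
  obtain ⟨hmem, hdist⟩ := wpar_iterate G hD hv w hw _ le_rfl
  exact eq_of_wdist_eq_zero G (hD _ hmem) (by omega)

lemma wpar_iterate_uniq (hD : ∀ w ∈ D, ∃ p : G.Walk v w, ∀ x ∈ p.support, x ∈ D) (hv : v ∈ D)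
    {w c : V} (hw : w ∈ D) (hc : 1 ≤ wdist G D v c) {j : ℕ}
    (hj : (wpar G D v)^[j] w = c) : j = wdist G D v w - wdist G D v c ∧ j ≤ wdist G D v w := by
  by_cases hle : j ≤ wdist G D v w
  · obtain ⟨-, hdist⟩ := wpar_iterate G hD hv w hw j hle
    rw [hj] at hdist
    omega
  · exfalso
    have hfix : (wpar G D v)^[j] w = v := by
      have h1 : j = (j - wdist G D v w) + wdist G D v w := by omega
      rw [h1, Function.iterate_add_apply, wpar_iterate_root G hD hv w hw,
        Function.iterate_fixed (wpar_self G)]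
    rw [hfix] at hj
    rw [← hj, wdist_self G hv] at hc
    omega

lemma walk_from_iterate (hD : ∀ w ∈ D, ∃ p : G.Walk v w, ∀ x ∈ p.support, x ∈ D) (hv : v ∈ D)
    (w : V) (hw : w ∈ D) :
    ∀ i, i ≤ wdist G D v w → ∃ p : G.Walk ((wpar G D v)^[i] w) w,
      p.length = i ∧ ∀ x ∈ p.support, ∃ j, j ≤ i ∧ x = (wpar G D v)^[j] w := by
  intro i
  induction i with
  | zero => exact fun _ => ⟨Walk.nil, rfl, fun x hx => ⟨0, le_rfl, by simpa using hx⟩⟩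
  | succ i ih =>
      intro hi
      obtain ⟨p, hl, hs⟩ := ih (by omega)
      obtain ⟨hmem, hdist⟩ := wpar_iterate G hD hv w hw i (by omega)
      have hne : (wpar G D v)^[i] w ≠ v := by
        intro he
        rw [he, wdist_self G hv] at hdist
        omega
      obtain ⟨-, hadj, -⟩ := wpar_spec G hmem hne (hD _ hmem)
      rw [Function.iterate_succ_apply']
      refine ⟨Walk.cons hadj p, by simp [hl], ?_⟩
      intro x hx
      rw [Walk.support_cons] at hx
      rcases List.mem_cons.mp hx with hx | hx
      · exact ⟨i + 1, le_rfl, by rw [hx, Function.iterate_succ_apply']⟩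
      · obtain ⟨j, hj, hxe⟩ := hs x hx
        exact ⟨j, by omega, hxe⟩

lemma adj_root (hD : ∀ w ∈ D, ∃ p : G.Walk v w, ∀ x ∈ p.support, x ∈ D) (hv : v ∈ D)
    {c : V} (hc : c ∈ D) (hc1 : wdist G D v c = 1) : G.Adj v c := by
  have hne : c ≠ v := by
    intro he; rw [he, wdist_self G hv] at hc1; omega
  obtain ⟨h1, h2, h3⟩ := wpar_spec G hc hne (hD _ hc)
  have : wpar G D v c = v :=
    eq_of_wdist_eq_zero G (hD _ h1) (by omega)
  rwa [this] at h2

end Spider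

section Subtree
variable {V : Type*} (G : SimpleGraph V)

/-- The subtree of the BFS tree of `D` rooted at `v`, hanging below `c`. -/
def subtreeSet (D : Set V) (v c : V) : Set V :=
  {w | w ∈ D ∧ ∃ j, (wpar G D v)^[j] w = c}

variable {D : Set V} {v : V}

lemma subtreeSet_subset {c : V} : subtreeSet G D v c ⊆ D := fun _ hw => hw.1

lemma mem_subtreeSet_par (hD : ∀ w ∈ D, ∃ p : G.Walk v w, ∀ x ∈ p.support, x ∈ D)
    (hv : v ∈ D) {c w : V} (hc1 : wdist G D v c = 1) (hw : w ∈ subtreeSet G D v c) :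
    (wpar G D v)^[wdist G D v w - 1] w = c := by
  obtain ⟨hwD, j, hj⟩ := hw
  obtain ⟨he, -⟩ := wpar_iterate_uniq G hD hv hwD (by omega) hj
  rw [← hj, he, hc1]

lemma self_mem_subtreeSet {c : V} (hc : c ∈ D) : c ∈ subtreeSet G D v c := ⟨hc, 0, rfl⟩

lemma root_not_mem_subtreeSet (hv : v ∈ D) {c : V} (hc1 : wdist G D v c = 1) :
    v ∉ subtreeSet G D v c := by
  rintro ⟨-, j, hj⟩
  rw [Function.iterate_fixed (wpar_self G)] at hj
  rw [← hj, wdist_self G hv] at hc1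
  omega

lemma subtreeSet_disjoint (hD : ∀ w ∈ D, ∃ p : G.Walk v w, ∀ x ∈ p.support, x ∈ D)
    (hv : v ∈ D) {c₁ c₂ : V} (hc1 : wdist G D v c₁ = 1) (hc2 : wdist G D v c₂ = 1)
    (hne : c₁ ≠ c₂) : Disjoint (subtreeSet G D v c₁) (subtreeSet G D v c₂) := by
  rw [Set.disjoint_left]
  intro w h1 h2
  exact hne ((mem_subtreeSet_par G hD hv hc1 h1).symm.trans (mem_subtreeSet_par G hD hv hc2 h2))

lemma subtreeSet_closed (hD : ∀ w ∈ D, ∃ p : G.Walk v w, ∀ x ∈ p.support, x ∈ D)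
    (hv : v ∈ D) {c w : V} (hc1 : wdist G D v c = 1) (hw : w ∈ subtreeSet G D v c) :
    ∀ i, i ≤ wdist G D v w - 1 → (wpar G D v)^[i] w ∈ subtreeSet G D v c := by
  intro i hi
  refine ⟨(wpar_iterate G hD hv w hw.1 i (by omega)).1, (wdist G D v w - 1) - i, ?_⟩
  rw [← Function.iterate_add_apply]
  have he : wdist G D v w - 1 - i + i = wdist G D v w - 1 := by
    have := (wpar_iterate_uniq G hD hv hw.1 (by omega) hw.2.choose_spec).2
    omega
  rw [he]
  exact mem_subtreeSet_par G hD hv hc1 hw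

lemma subtreeSet_walk (hD : ∀ w ∈ D, ∃ p : G.Walk v w, ∀ x ∈ p.support, x ∈ D)
    (hv : v ∈ D) {c w : V} (hc1 : wdist G D v c = 1) (hw : w ∈ subtreeSet G D v c) :
    ∃ p : G.Walk c w, p.length = wdist G D v w - 1 ∧
      ∀ x ∈ p.support, x ∈ subtreeSet G D v c := by
  have hpc := mem_subtreeSet_par G hD hv hc1 hw
  obtain ⟨p, hl, hs⟩ := walk_from_iterate G hD hv w hw.1 (wdist G D v w - 1) (by omega)
  subst hpc
  refine ⟨p, hl, fun x hx => ?_⟩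
  obtain ⟨j, hj, rfl⟩ := hs x hx
  exact subtreeSet_closed G hD hv hc1 hw j hj

end Subtree

section SpiderLemma
variable {V : Type*} [Fintype V]

lemma singleton_induce_connected (G : SimpleGraph V) (v : V) :
    (G.induce ({v} : Set V)).Connected := by
  refine induce_connected_of_walks G {v} v rfl ?_
  intro w hw
  rcases hw with rfl
  exact ⟨Walk.nil, by simp⟩

lemma spider (G : SimpleGraph V) (t : ℕ) (ht : 1 ≤ t) :
    ∀ (k : ℕ) (D : Set V) (v : V), v ∈ D →
    (∀ w ∈ D, ∃ p : G.Walk v w, p.length ≤ k ∧ ∀ x ∈ p.support, x ∈ D) →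
    ∀ S : Set V, S ⊆ D → t ^ k < S.ncard →
    ∃ (B₀ : Set V) (legs : Fin t → Set V) (s : Fin t → V),
      B₀ ⊆ D ∧ B₀.Nonempty ∧ (G.induce B₀).Connected ∧
      (∀ i, legs i ⊆ D) ∧ (∀ i, (G.induce (legs i)).Connected) ∧
      (∀ i, Disjoint B₀ (legs i)) ∧ (Pairwise fun i j => Disjoint (legs i) (legs j)) ∧
      (∀ i, s i ∈ legs i ∧ s i ∈ S) ∧
      (∀ i, ∃ a ∈ B₀, ∃ b ∈ legs i, G.Adj a b) := by
  intro k
  induction k with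
  | zero =>
      intro D v hv hwalk S hSD hcard
      exfalso
      have hSv : S ⊆ {v} := by
        intro s hs
        obtain ⟨p, hl, hsup⟩ := hwalk s (hSD hs)
        have : v = s := Walk.eq_of_length_eq_zero (p := p) (by omega)
        simp [← this]
      have hle := Set.ncard_le_ncard hSv (Set.finite_singleton v)
      rw [Set.ncard_singleton] at hle
      simp only [pow_zero] at hcard
      omega
  | succ k ih =>
      intro D v hv hwalk S hSD hcard
      classical
      have hD : ∀ w ∈ D, ∃ p : G.Walk v w, ∀ x ∈ p.support, x ∈ D :=
        fun w hw => (hwalk w hw).imp (fun p hp => hp.2)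
      have hdk : ∀ w ∈ D, wdist G D v w ≤ k + 1 := by
        intro w hw
        obtain ⟨p, hl, hs⟩ := hwalk w hw
        exact le_trans (wdist_le G p hs) hl
      set Ch : Set V :=
        {c | c ∈ D ∧ wdist G D v c = 1 ∧ ∃ s, s ∈ S ∧ s ∈ subtreeSet G D v c} with hChdef
      have hchild : ∀ s, s ∈ S → s ≠ v →
          (wpar G D v)^[wdist G D v s - 1] s ∈ Ch ∧
            s ∈ subtreeSet G D v ((wpar G D v)^[wdist G D v s - 1] s) := by
        intro s hs hsv
        have hsD := hSD hs
        have hd1 : 1 ≤ wdist G D v s := by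
          rcases Nat.eq_zero_or_pos (wdist G D v s) with h0 | h1
          · exact absurd (eq_of_wdist_eq_zero G (hD s hsD) h0) hsv
          · exact h1
        obtain ⟨hcD, hcd⟩ := wpar_iterate G hD hv s hsD (wdist G D v s - 1) (by omega)
        have hmem : s ∈ subtreeSet G D v ((wpar G D v)^[wdist G D v s - 1] s) :=
          ⟨hsD, wdist G D v s - 1, rfl⟩
        exact ⟨⟨hcD, by omega, s, hs, hmem⟩, hmem⟩
      by_cases hnum : t ≤ Ch.ncard
      · -- many children: spider centered at v
        rw [Set.ncard_eq_toFinset_card'] at hnum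
        obtain ⟨u, hu_sub, hu_card⟩ := Finset.exists_subset_card_eq hnum
        have e : ↥u ≃ Fin t := Fintype.equivFinOfCardEq (by rw [Fintype.card_coe]; exact hu_card)
        set f : Fin t → V := fun i => ((e.symm i : ↥u) : V) with hf
        have hfCh : ∀ i, f i ∈ Ch := by
          intro i
          have := hu_sub (e.symm i).2
          exact Set.mem_toFinset.mp this
        have hf_inj : Function.Injective f := by
          intro i j hij
          have := e.symm.injective (Subtype.ext hij)
          exact this
        have hS_choice : ∀ i : Fin t, ∃ s, s ∈ S ∧ s ∈ subtreeSet G D v (f i) :=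
          fun i => (hfCh i).2.2
        choose s hsS hsT using hS_choice
        refine ⟨{v}, fun i => subtreeSet G D v (f i), s, ?_, ⟨v, rfl⟩, ?_, ?_, ?_, ?_, ?_, ?_, ?_⟩
        · simpa using hv
        · exact singleton_induce_connected G v
        · exact fun i => subtreeSet_subset G
        · intro i
          refine induce_connected_of_walks G _ (f i) (self_mem_subtreeSet G (hfCh i).1) ?_
          intro w hw
          obtain ⟨p, -, hps⟩ := subtreeSet_walk G hD hv (hfCh i).2.1 hw
          exact ⟨p, hps⟩
        · intro i
          rw [Set.disjoint_left]
          rintro x rfl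
          exact root_not_mem_subtreeSet G hv (hfCh i).2.1
        · intro i j hij
          exact subtreeSet_disjoint G hD hv (hfCh i).2.1 (hfCh j).2.1 (fun h => hij (hf_inj h))
        · exact fun i => ⟨hsT i, hsS i⟩
        · intro i
          exact ⟨v, rfl, f i, self_mem_subtreeSet G (hfCh i).1,
            adj_root G hD hv (hfCh i).1 (hfCh i).2.1⟩
      · -- few children: recurse into a heavy subtree
        push_neg at hnum
        set g : V → V := fun s => (wpar G D v)^[wdist G D v s - 1] s with hg
        set SF : Finset V := (S \ {v}).toFinset with hSF
        have hmaps : ∀ x ∈ SF, g x ∈ Ch.toFinset := by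
          intro x hx
          obtain ⟨hxS, hxv⟩ := Set.mem_toFinset.mp hx
          exact Set.mem_toFinset.mpr (hchild x hxS (by simpa using hxv)).1
        have hkey : Ch.toFinset.card * t ^ k < SF.card := by
          have h1 : Ch.toFinset.card ≤ t - 1 := by
            rw [← Set.ncard_eq_toFinset_card']
            omega
          have h2 : t ^ (k + 1) ≤ SF.card := by
            have hsf : SF.card = (S \ {v}).ncard := (Set.ncard_eq_toFinset_card' _).symm
            have h3 : S.ncard ≤ (S \ {v}).ncard + 1 := by
              calc S.ncard ≤ ((S \ {v}) ∪ {v}).ncard := by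
                    refine Set.ncard_le_ncard ?_ (Set.toFinite _)
                    intro x hx
                    by_cases hxv : x = v
                    · exact Or.inr (by simp [hxv])
                    · exact Or.inl ⟨hx, hxv⟩
                _ ≤ (S \ {v}).ncard + ({v} : Set V).ncard := Set.ncard_union_le _ _
                _ = (S \ {v}).ncard + 1 := by rw [Set.ncard_singleton]
            omega
          have h4 : 1 ≤ t ^ k := Nat.one_le_pow _ _ (by omega)
          have h5 : Ch.toFinset.card * t ^ k ≤ (t - 1) * t ^ k :=
            Nat.mul_le_mul_right _ h1
          have h6 : (t - 1) * t ^ k + t ^ k = t ^ (k + 1) := by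
            have ht1 : t - 1 + 1 = t := by omega
            calc (t - 1) * t ^ k + t ^ k = (t - 1 + 1) * t ^ k := by ring
              _ = t * t ^ k := by rw [ht1]
              _ = t ^ (k + 1) := by rw [pow_succ, mul_comm]
          omega
        obtain ⟨c, hcCh, hfib⟩ :=
          Finset.exists_lt_card_fiber_of_mul_lt_card_of_maps_to hmaps hkey
        have hcCh' : c ∈ Ch := Set.mem_toFinset.mp hcCh
        obtain ⟨hcD, hcd1, -⟩ := hcCh'
        set F : Finset V := {x ∈ SF | g x = c} with hF
        have hFsub : (F : Set V) ⊆ subtreeSet G D v c := by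
          intro x hx
          obtain ⟨hxSF, hxg⟩ := Finset.mem_filter.mp hx
          obtain ⟨hxS, hxv⟩ := Set.mem_toFinset.mp hxSF
          have := (hchild x hxS (by simpa using hxv)).2
          rwa [show (wpar G D v)^[wdist G D v x - 1] x = c from hxg] at this
        have hFS : ∀ x ∈ (F : Set V), x ∈ S := by
          intro x hx
          obtain ⟨hxSF, -⟩ := Finset.mem_filter.mp hx
          exact (Set.mem_toFinset.mp hxSF).1
        obtain ⟨B₀, legs, s, h1, h2, h3, h4, h5, h6, h7, h8, h9⟩ :=
          ih (subtreeSet G D v c) c (self_mem_subtreeSet G hcD)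
            (by
              intro w hw
              obtain ⟨p, hpl, hps⟩ := subtreeSet_walk G hD hv hcd1 hw
              have := hdk w hw.1
              exact ⟨p, by omega, hps⟩)
            (F : Set V) hFsub (by rw [Set.ncard_coe_finset]; exact hfib)
        exact ⟨B₀, legs, s, h1.trans (subtreeSet_subset G), h2, h3,
          fun i => (h4 i).trans (subtreeSet_subset G), h5, h6, h7,
          fun i => ⟨(h8 i).1, hFS _ (h8 i).2⟩, h9⟩

end SpiderLemma
section Minor
variable {V : Type*}

lemma hasMinor_of_spider (G : SimpleGraph V) {t : ℕ} (hub B₀ : Set V) (legs : Fin t → Set V)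
    (hhubne : hub.Nonempty) (hhubconn : (G.induce hub).Connected)
    (hB₀ne : B₀.Nonempty) (hB₀conn : (G.induce B₀).Connected)
    (hdisj01 : Disjoint hub B₀) (hdisj0L : ∀ i, Disjoint hub (legs i))
    (hdisj1L : ∀ i, Disjoint B₀ (legs i))
    (hpair : Pairwise fun i j => Disjoint (legs i) (legs j))
    (hLne : ∀ i, (legs i).Nonempty) (hLconn : ∀ i, (G.induce (legs i)).Connected)
    (hadj0 : ∀ i, ∃ a ∈ hub, ∃ b ∈ legs i, G.Adj a b)
    (hadj1 : ∀ i, ∃ a ∈ B₀, ∃ b ∈ legs i, G.Adj a b) :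
    G.HasMinor (completeBipartiteGraph (Fin 2) (Fin t)) := by
  classical
  refine ⟨Sum.elim (fun j : Fin 2 => if j = 0 then hub else B₀) legs, ?_, ?_, ?_, ?_⟩
  · rintro (j | i)
    · by_cases hj : j = 0
      · simp only [Sum.elim_inl, hj, if_true]; exact hhubne
      · simp only [Sum.elim_inl, if_neg hj]; exact hB₀ne
    · exact hLne i
  · rintro (j | i)
    · by_cases hj : j = 0
      · subst hj; simp only [Sum.elim_inl, if_pos rfl]; exact hhubconn
      · rw [show (Sum.elim (fun j : Fin 2 => if j = 0 then hub else B₀) legs (Sum.inl j)) = B₀ from by simp [if_neg hj]]; exact hB₀conn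
    · exact hLconn i
  · rintro (j₁ | i₁) (j₂ | i₂) hne
    · have hjj : j₁ ≠ j₂ := fun h => hne (by rw [h])
      by_cases h1 : j₁ = 0
      · have h2 : j₂ ≠ 0 := fun h => hjj (h1.trans h.symm)
        simp only [Sum.elim_inl, h1, if_true, if_neg h2]
        exact hdisj01
      · have h2 : j₂ = 0 := by omega
        simp only [Sum.elim_inl, h2, if_true, if_neg h1]
        exact hdisj01.symm
    · by_cases h1 : j₁ = 0
      · simp only [Sum.elim_inl, Sum.elim_inr, h1, if_true]; exact hdisj0L i₂
      · simp only [Sum.elim_inl, Sum.elim_inr, if_neg h1]; exact hdisj1L i₂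
    · by_cases h2 : j₂ = 0
      · simp only [Sum.elim_inl, Sum.elim_inr, h2, if_true]; exact (hdisj0L i₁).symm
      · simp only [Sum.elim_inl, Sum.elim_inr, if_neg h2]; exact (hdisj1L i₁).symm
    · have hii : i₁ ≠ i₂ := fun h => hne (by rw [h])
      exact hpair hii
  · rintro (j₁ | i₁) (j₂ | i₂) hadj
    · simp at hadj
    · by_cases h1 : j₁ = 0
      · simp only [Sum.elim_inl, Sum.elim_inr, h1, if_true]; exact hadj0 i₂
      · simp only [Sum.elim_inl, Sum.elim_inr, if_neg h1]; exact hadj1 i₂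
    · by_cases h2 : j₂ = 0
      · simp only [Sum.elim_inl, Sum.elim_inr, h2, if_true]
        obtain ⟨a, ha, b, hb, hab⟩ := hadj0 i₁
        exact ⟨b, hb, a, ha, hab.symm⟩
      · simp only [Sum.elim_inl, Sum.elim_inr, if_neg h2]
        obtain ⟨a, ha, b, hb, hab⟩ := hadj1 i₁
        exact ⟨b, hb, a, ha, hab.symm⟩
    · simp at hadj

end Minor

/-- If `G` has no `K_{2,t}` minor (`t ≥ 2`) and `C, C'` are disjoint vertex sets, each
inducing a connected subgraph containing a vertex within distance `k` (inside the induced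
subgraph) of all its vertices, then the number of edges between `C` and `C'` is at most
`k²·t^(2k·t^k)`. -/
theorem edges_between_cells_le {V : Type*} [Fintype V]
    (t k : ℕ) (ht : 2 ≤ t) (hk : 1 ≤ k) (G : SimpleGraph V)
    (hfree : ¬ G.HasMinor (completeBipartiteGraph (Fin 2) (Fin t)))
    (C C' : Set V) (hdisj : Disjoint C C')
    (hconn : (G.induce C).Connected) (hconn' : (G.induce C').Connected)
    (hrad : ∃ vC ∈ C, ∀ w ∈ C, ∃ p : G.Walk vC w, p.length ≤ k ∧ ∀ x ∈ p.support, x ∈ C)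
    (hrad' : ∃ vC' ∈ C', ∀ w ∈ C', ∃ p : G.Walk vC' w,
      p.length ≤ k ∧ ∀ x ∈ p.support, x ∈ C') :
    {e : V × V | e.1 ∈ C ∧ e.2 ∈ C' ∧ G.Adj e.1 e.2}.ncard ≤ k ^ 2 * t ^ (2 * k * t ^ k) := by
  classical
  obtain ⟨vC, hvC, hradC⟩ := hrad
  obtain ⟨vC', hvC', hradC'⟩ := hrad'
  set N : V → Set V := fun b => {a | a ∈ C ∧ G.Adj a b} with hNdef
  -- Fact A: every vertex of `C'` has at most `t^k` neighbours in `C`.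
  have factA : ∀ b ∈ C', (N b).ncard ≤ t ^ k := by
    intro b hb
    by_contra hlt
    push_neg at hlt
    obtain ⟨B₀, legs, s, h1, h2, h3, h4, h5, h6, h7, h8, h9⟩ :=
      spider G t (by omega) k C vC hvC hradC (N b) (fun a ha => ha.1) hlt
    apply hfree
    refine hasMinor_of_spider G {b} B₀ legs ⟨b, rfl⟩ (singleton_induce_connected G b)
      h2 h3 ?_ ?_ h6 h7 (fun i => ⟨s i, (h8 i).1⟩) h5 ?_ h9
    · rw [Set.disjoint_left]
      rintro x rfl hx
      exact Set.disjoint_left.mp hdisj (h1 hx) hb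
    · intro i
      rw [Set.disjoint_left]
      rintro x rfl hx
      exact Set.disjoint_left.mp hdisj (h4 i hx) hb
    · intro i
      exact ⟨b, rfl, s i, (h8 i).1, ((h8 i).2.2).symm⟩
  -- Fact B: at most `t^k` vertices of `C'` have a neighbour in `C`.
  set S' : Set V := {b | b ∈ C' ∧ ∃ a ∈ C, G.Adj a b} with hS'def
  have factB : S'.ncard ≤ t ^ k := by
    by_contra hlt
    push_neg at hlt
    obtain ⟨B₀, legs, s, h1, h2, h3, h4, h5, h6, h7, h8, h9⟩ :=
      spider G t (by omega) k C' vC' hvC' hradC' S' (fun a ha => ha.1) hlt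
    apply hfree
    refine hasMinor_of_spider G C B₀ legs ⟨vC, hvC⟩ hconn
      h2 h3 ?_ ?_ h6 h7 (fun i => ⟨s i, (h8 i).1⟩) h5 ?_ h9
    · rw [Set.disjoint_left]
      intro x hx hx'
      exact Set.disjoint_left.mp hdisj hx (h1 hx')
    · intro i
      rw [Set.disjoint_left]
      intro x hx hx'
      exact Set.disjoint_left.mp hdisj hx (h4 i hx')
    · intro i
      obtain ⟨a, haC, hab⟩ := ((h8 i).2).2
      exact ⟨a, haC, s i, (h8 i).1, hab⟩
  -- Counting.
  have hsubE : {e : V × V | e.1 ∈ C ∧ e.2 ∈ C' ∧ G.Adj e.1 e.2}.toFinset ⊆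
      S'.toFinset.biUnion (fun b => (N b).toFinset.image (fun a => (a, b))) := by
    intro e he
    obtain ⟨he1, he2, he3⟩ := Set.mem_toFinset.mp he
    refine Finset.mem_biUnion.mpr ⟨e.2, Set.mem_toFinset.mpr ⟨he2, e.1, he1, he3⟩, ?_⟩
    exact Finset.mem_image.mpr ⟨e.1, Set.mem_toFinset.mpr ⟨he1, he3⟩, Prod.mk.eta⟩
  have hmain : {e : V × V | e.1 ∈ C ∧ e.2 ∈ C' ∧ G.Adj e.1 e.2}.ncard ≤ t ^ k * t ^ k := by
    rw [Set.ncard_eq_toFinset_card']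
    calc _ ≤ (S'.toFinset.biUnion (fun b => (N b).toFinset.image (fun a => (a, b)))).card :=
          Finset.card_le_card hsubE
      _ ≤ ∑ b ∈ S'.toFinset, ((N b).toFinset.image (fun a => (a, b))).card :=
          Finset.card_biUnion_le
      _ ≤ ∑ _b ∈ S'.toFinset, t ^ k := by
          refine Finset.sum_le_sum ?_
          intro b hb
          refine le_trans Finset.card_image_le ?_
          rw [← Set.ncard_eq_toFinset_card']
          exact factA b (Set.mem_toFinset.mp hb).1
      _ = S'.toFinset.card * t ^ k := by rw [Finset.sum_const, smul_eq_mul]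
      _ ≤ t ^ k * t ^ k := by
          refine Nat.mul_le_mul_right _ ?_
          rw [← Set.ncard_eq_toFinset_card']
          exact factB
  have hpow : t ^ k * t ^ k ≤ k ^ 2 * t ^ (2 * k * t ^ k) := by
    have h1 : t ^ k * t ^ k = t ^ (k + k) := (pow_add t k k).symm
    have h2 : 1 ≤ t ^ k := Nat.one_le_pow _ _ (by omega)
    have h3 : k + k ≤ 2 * k * t ^ k := by nlinarith
    calc t ^ k * t ^ k = t ^ (k + k) := h1
      _ ≤ t ^ (2 * k * t ^ k) := Nat.pow_le_pow_right (by omega) h3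
      _ ≤ k ^ 2 * t ^ (2 * k * t ^ k) := Nat.le_mul_of_pos_left _ (by positivity)
  exact le_trans hmain hpow
end

section
/- Let G = (V, E) be a graph, let P′ = (V_1, ..., V_l) be a partition of V, and let ∂(P′) be the set of vertices having a neighbor in a different part. Let M be a minimum distance-k dominating set of G. For each i, let Q_i ⊆ V_i be a minimum-size set such that Q_i ∪ (∂(P′) ∩ V_i) distance-k dominates V_i in G. Then Q := ∂(P′) ∪ ⋃_i Q_i is a distance-k dominating set of G with |Q| ≤ |∂(P′)| + |M|. -/
open SimpleGraph

/-- `D` distance-`k` dominates the set `S` in `G`. -/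
def KDominates {V : Type*} (G : SimpleGraph V) (k : ℕ) (D S : Set V) : Prop :=
  ∀ v ∈ S, ∃ d ∈ D, ∃ p : G.Walk d v, p.length ≤ k

private lemma ncard_iUnion_le_sum {α : Type*} [Fintype α] {ι : Type*} (s : Finset ι)
    (f : ι → Set α) : (⋃ i ∈ s, f i).ncard ≤ ∑ i ∈ s, (f i).ncard := by
  classical
  induction s using Finset.induction with
  | empty => simp
  | insert _ _ hi ih =>
    rename_i a s
    rw [Finset.set_biUnion_insert, Finset.sum_insert hi]
    exact le_trans (Set.ncard_union_le _ _) (by omega)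

private lemma walk_boundary {V : Type*} {G : SimpleGraph V} {l : ℕ} {part : V → Fin l}
    {i : Fin l} : ∀ {d w : V} (p : G.Walk d w), part w = i →
    part d = i ∨ ∃ b, part b = i ∧ (∃ u, G.Adj b u ∧ part u ≠ part b) ∧
      ∃ q : G.Walk b w, q.length ≤ p.length := by
  intro d w p hw
  induction p with
  | nil => exact Or.inl hw
  | @cons d x w h q ih =>
    rcases ih hw with hx | ⟨b, hb, hbB, q', hq'⟩
    · by_cases hd : part d = i
      · exact Or.inl hd
      · exact Or.inr ⟨x, hx, ⟨d, h.symm, by rw [hx]; exact hd⟩, q, by simp⟩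
    · exact Or.inr ⟨b, hb, hbB, q', by simp; omega⟩

/-- Given a partition `(V_1, …, V_l)` of `V(G)` with boundary `∂`, a minimum distance-`k`
dominating set `M`, and for each part a minimum set `Q_i ⊆ V_i` such that
`Q_i ∪ (∂ ∩ V_i)` distance-`k` dominates `V_i`, the set `Q = ∂ ∪ ⋃_i Q_i` is a
distance-`k` dominating set of `G` of size at most `|∂| + |M|`. -/
theorem boundary_union_local_solutions {V : Type*} [Fintype V]
    (G : SimpleGraph V) (k l : ℕ) (hl : 1 ≤ l)
    (part : V → Fin l)
    (M : Set V) (hM : KDominates G k M Set.univ)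
    (hMmin : ∀ D : Set V, KDominates G k D Set.univ → M.ncard ≤ D.ncard)
    (B : Set V) (hB : B = {v : V | ∃ w, G.Adj v w ∧ part w ≠ part v})
    (Q : Fin l → Set V)
    (hQsub : ∀ i, Q i ⊆ {v | part v = i})
    (hQdom : ∀ i, KDominates G k (Q i ∪ (B ∩ {v | part v = i})) {v | part v = i})
    (hQmin : ∀ i, ∀ Q' : Set V, Q' ⊆ {v | part v = i} →
      KDominates G k (Q' ∪ (B ∩ {v | part v = i})) {v | part v = i} →
      (Q i).ncard ≤ Q'.ncard) :
    KDominates G k (B ∪ ⋃ i, Q i) Set.univ ∧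
      (B ∪ ⋃ i, Q i).ncard ≤ B.ncard + M.ncard := by
  classical
  constructor
  · intro v _
    obtain ⟨d, hd, p, hp⟩ := hQdom (part v) v rfl
    refine ⟨d, ?_, p, hp⟩
    rcases hd with h | h
    · exact Or.inr (Set.mem_iUnion.2 ⟨part v, h⟩)
    · exact Or.inl h.1
  · -- each Q i is at most M ∩ V_i
    have hM' : ∀ i, KDominates G k ((M ∩ {v | part v = i}) ∪ (B ∩ {v | part v = i}))
        {v | part v = i} := by
      intro i w hw
      obtain ⟨d, hd, p, hp⟩ := hM w trivial
      rcases walk_boundary p hw with hdi | ⟨b, hb, hbB, q, hq⟩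
      · exact ⟨d, Or.inl ⟨hd, hdi⟩, p, hp⟩
      · exact ⟨b, Or.inr ⟨hB ▸ hbB, hb⟩, q, hq.trans hp⟩
    have hQle : ∀ i, (Q i).ncard ≤ (M ∩ {v | part v = i}).ncard := fun i =>
      hQmin i _ Set.inter_subset_right (hM' i)
    have h1 : (B ∪ ⋃ i, Q i).ncard ≤ B.ncard + (⋃ i, Q i).ncard := Set.ncard_union_le _ _
    have h2 : (⋃ i, Q i).ncard ≤ ∑ i : Fin l, (Q i).ncard := by
      have := ncard_iUnion_le_sum (Finset.univ : Finset (Fin l)) Q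
      simpa using this
    have h3 : ∑ i : Fin l, (M ∩ {v | part v = i}).ncard ≤ M.ncard := by
      have hdisj : ∀ i ∈ (Finset.univ : Finset (Fin l)), ∀ j ∈ Finset.univ, i ≠ j →
          Disjoint ((M ∩ {v | part v = i}).toFinset) ((M ∩ {v | part v = j}).toFinset) := by
        intro i _ j _ hij
        simp only [Finset.disjoint_left, Set.mem_toFinset, Set.mem_inter_iff, Set.mem_setOf_eq]
        rintro x ⟨_, hxi⟩ ⟨_, hxj⟩
        exact hij (hxi ▸ hxj ▸ rfl)
      calc ∑ i : Fin l, (M ∩ {v | part v = i}).ncard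
          = ∑ i : Fin l, ((M ∩ {v | part v = i}).toFinset).card := by
            simp [Set.ncard_eq_toFinset_card']
        _ = (Finset.univ.biUnion fun i => (M ∩ {v | part v = i}).toFinset).card :=
            (Finset.card_biUnion hdisj).symm
        _ ≤ M.toFinset.card := by
            apply Finset.card_le_card
            intro x hx
            simp only [Finset.mem_biUnion, Set.mem_toFinset, Set.mem_inter_iff] at hx ⊢
            obtain ⟨i, _, hxM, _⟩ := hx
            exact hxM
        _ = M.ncard := (Set.ncard_eq_toFinset_card' M).symm
    have h4 : ∑ i : Fin l, (Q i).ncard ≤ ∑ i : Fin l, (M ∩ {v | part v = i}).ncard :=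
      Finset.sum_le_sum fun i _ => hQle i
    omega
end

section
/- Let H be a graph with no K_{2,t} minor (t ≥ 2), Q ⊆ V(H), and let 𝒫 be a maximal family of pairwise internally disjoint Q-paths of length at most h. Then the set Q′ of all vertices lying on paths of 𝒫 satisfies |Q′| ≤ (t+1)²(h+1)|Q|/2, and every Q-path of length at most h not in 𝒫 contains an internal vertex of some path in 𝒫. -/
open SimpleGraph

/-- A `Q`-path of length at most `h`, packaged with its endpoints. -/
def IsQPathOf {V : Type*} (G : SimpleGraph V) (Q : Set V) (h : ℕ)
    (p : Σ u v : V, G.Walk u v) : Prop :=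
  p.2.2.IsPath ∧ p.1 ∈ Q ∧ p.2.1 ∈ Q ∧
    (∀ y ∈ p.2.2.support, y ∈ Q → y = p.1 ∨ y = p.2.1) ∧ p.2.2.length ≤ h

/-- Two packaged paths are internally disjoint if every common vertex is an endpoint of
both of them. -/
def IntDisj {V : Type*} {G : SimpleGraph V} (p q : Σ u v : V, G.Walk u v) : Prop :=
  ∀ x ∈ p.2.2.support, x ∈ q.2.2.support →
    (x = p.1 ∨ x = p.2.1) ∧ (x = q.1 ∨ x = q.2.1)

section Aux

variable {V : Type*} {H : SimpleGraph V}

/-- Reachability within a vertex set. -/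
def QReach (H : SimpleGraph V) (S : Set V) (x y : V) : Prop :=
  ∃ w : H.Walk x y, ∀ z ∈ w.support, z ∈ S

lemma QReach.mono {S T : Set V} (hST : S ⊆ T) {x y : V} (h : QReach H S x y) :
    QReach H T x y := by
  obtain ⟨w, hw⟩ := h
  exact ⟨w, fun z hz => hST (hw z hz)⟩

lemma QReach.trans {S : Set V} {x y z : V} (h1 : QReach H S x y) (h2 : QReach H S y z) :
    QReach H S x z := by
  obtain ⟨w1, hw1⟩ := h1
  obtain ⟨w2, hw2⟩ := h2
  refine ⟨w1.append w2, fun a ha => ?_⟩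
  rcases (SimpleGraph.Walk.mem_support_append_iff _ _).mp ha with h | h
  · exact hw1 a h
  · exact hw2 a h

lemma QReach.symm {S : Set V} {x y : V} (h : QReach H S x y) : QReach H S y x := by
  obtain ⟨w, hw⟩ := h
  exact ⟨w.reverse, fun z hz => hw z (by simpa [SimpleGraph.Walk.support_reverse] using hz)⟩

lemma qreach_support {u v x : V} (w : H.Walk u v) (hx : x ∈ w.support) :
    QReach H {z | z ∈ w.support} u x := by
  classical
  exact ⟨w.takeUntil x hx, fun z hz => SimpleGraph.Walk.support_takeUntil_subset _ _ hz⟩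

lemma reachable_induce_of_walk_s16 {S : Set V} :
    ∀ {x y : V} (w : H.Walk x y) (hw : ∀ z ∈ w.support, z ∈ S),
      (H.induce S).Reachable ⟨x, hw x w.start_mem_support⟩ ⟨y, hw y w.end_mem_support⟩ := by
  intro x y w
  induction w with
  | nil => intro hw; exact SimpleGraph.Reachable.refl _
  | @cons a b c h p ih =>
    intro hw
    have hb : b ∈ S := hw b (by simp)
    have ha : a ∈ S := hw a (by simp)
    have hadj : (H.induce S).Adj ⟨a, ha⟩ ⟨b, hb⟩ := h
    refine (hadj.reachable).trans ?_
    exact ih fun z hz => hw z (by simp [hz])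

lemma induce_connected_of_reach {S : Set V} {x₀ : V} (hx₀ : x₀ ∈ S)
    (hall : ∀ y ∈ S, QReach H S x₀ y) : (H.induce S).Connected := by
  rw [SimpleGraph.connected_iff]
  constructor
  · rintro ⟨a, ha⟩ ⟨b, hb⟩
    obtain ⟨wa, hwa⟩ := hall a ha
    obtain ⟨wb, hwb⟩ := hall b hb
    exact (reachable_induce_of_walk_s16 wa hwa).symm.trans (reachable_induce_of_walk_s16 wb hwb)
  · exact ⟨⟨x₀, hx₀⟩⟩

lemma qreach_of_induce_connected {S : Set V} (h : (H.induce S).Connected)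
    {x y : V} (hx : x ∈ S) (hy : y ∈ S) : QReach H S x y := by
  obtain ⟨w⟩ := h.preconnected ⟨x, hx⟩ ⟨y, hy⟩
  refine ⟨w.map ⟨Subtype.val, fun {a b} hab => hab⟩, fun z hz => ?_⟩
  rw [SimpleGraph.Walk.support_map] at hz
  obtain ⟨⟨z', hz'⟩, _, rfl⟩ := List.mem_map.mp hz
  exact hz'

/-- The set of internal vertices of a packaged path. -/
def intSet (p : Σ u v : V, H.Walk u v) : Set V :=
  {x | x ∈ p.2.2.support ∧ x ≠ p.1 ∧ x ≠ p.2.1}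

lemma intSet_subset_support (p : Σ u v : V, H.Walk u v) : intSet p ⊆ {x | x ∈ p.2.2.support} :=
  fun _ hx => hx.1

lemma support_mem_cases {p : Σ u v : V, H.Walk u v} {x : V} (hx : x ∈ p.2.2.support) :
    x = p.1 ∨ x = p.2.1 ∨ x ∈ intSet p := by
  by_cases h1 : x = p.1
  · exact Or.inl h1
  by_cases h2 : x = p.2.1
  · exact Or.inr (Or.inl h2)
  exact Or.inr (Or.inr ⟨hx, h1, h2⟩)

lemma walk_decomp {u v : V} (w : H.Walk u v) (hl : 2 ≤ w.length) :
    ∃ (s s' : V) (m : H.Walk s s'), H.Adj u s ∧ H.Adj s' v ∧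
      w.support = u :: (m.support ++ [v]) := by
  cases w with
  | nil => simp at hl
  | @cons _ b _ h p =>
    obtain ⟨x, q, h', hq⟩ := SimpleGraph.Walk.exists_cons_eq_concat h p
    cases q with
    | nil =>
      have : (SimpleGraph.Walk.cons h p).length = 1 := by
        rw [hq]; simp [SimpleGraph.Walk.length_concat]
      simp only [SimpleGraph.Walk.length_cons] at hl this
      omega
    | @cons _ c _ h2 m =>
      refine ⟨c, x, m, h2, h', ?_⟩
      rw [hq, SimpleGraph.Walk.support_concat, SimpleGraph.Walk.support_cons]
      simp [List.concat_eq_append]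

lemma intSet_spec (p : Σ u v : V, H.Walk u v) (hp : p.2.2.IsPath) (hl : 2 ≤ p.2.2.length) :
    ∃ s s' : V, H.Adj p.1 s ∧ H.Adj s' p.2.1 ∧ s ∈ intSet p ∧ s' ∈ intSet p ∧
      (H.induce (intSet p)).Connected ∧ (intSet p).ncard + 2 ≤ p.2.2.length + 1 ∧
      p.1 ≠ p.2.1 := by
  obtain ⟨u, v, w⟩ := p
  dsimp only at hl ⊢
  obtain ⟨s, s', m, hus, hsv, hsupp⟩ := walk_decomp w hl
  have hnodup := hp.support_nodup
  rw [hsupp] at hnodup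
  rw [List.nodup_cons] at hnodup
  obtain ⟨hu, hnodup2⟩ := hnodup
  have hunm : u ∉ m.support := fun h => hu (List.mem_append.mpr (Or.inl h))
  have huv : u ≠ v := fun h => hu (List.mem_append.mpr (Or.inr (by simp [h])))
  have hvm : v ∉ m.support := by
    rw [List.nodup_append] at hnodup2
    intro h
    exact hnodup2.2.2 v h v (by simp) rfl
  have hset : intSet ⟨u, v, w⟩ = {x | x ∈ m.support} := by
    ext x
    simp only [intSet, Set.mem_setOf_eq]
    constructor
    · rintro ⟨hxs, hxu, hxv⟩
      rw [hsupp] at hxs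
      rcases List.mem_cons.mp hxs with rfl | hxs
      · exact absurd rfl hxu
      rcases List.mem_append.mp hxs with h | h
      · exact h
      · simp at h; exact absurd h hxv
    · intro hx
      refine ⟨?_, ?_, ?_⟩
      · rw [hsupp]; exact List.mem_cons.mpr (Or.inr (List.mem_append.mpr (Or.inl hx)))
      · rintro rfl; exact hunm hx
      · rintro rfl; exact hvm hx
  have hsmem : s ∈ intSet ⟨u, v, w⟩ := by rw [hset]; exact m.start_mem_support
  have hs'mem : s' ∈ intSet ⟨u, v, w⟩ := by rw [hset]; exact m.end_mem_support
  refine ⟨s, s', hus, hsv, hsmem, hs'mem, ?_, ?_, huv⟩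
  · rw [hset]
    refine induce_connected_of_reach (x₀ := s) m.start_mem_support ?_
    intro y hy
    exact qreach_support m hy
  · have h1 : w.support.length = w.length + 1 := w.length_support
    have h2 : m.support.length = m.length + 1 := m.length_support
    rw [hsupp] at h1
    have h3 : (u :: (m.support ++ [v])).length = m.support.length + 2 := by simp
    have hlen : m.length + 2 = w.length := by omega
    classical
    have hcard : (intSet ⟨u, v, w⟩).ncard ≤ m.support.length := by
      rw [hset, ← List.coe_toFinset, Set.ncard_coe_finset]
      exact m.support.toFinset_card_le
    omega

lemma path_ne_of_two_le_length (p : Σ u v : V, H.Walk u v) (hp : p.2.2.IsPath)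
    (hl : 2 ≤ p.2.2.length) : p.1 ≠ p.2.1 := by
  obtain ⟨-, -, -, -, -, -, -, -, h⟩ := intSet_spec p hp hl
  exact h

lemma support_short_cases {u v : V} (w : H.Walk u v) {x : V} (hx : x ∈ w.support) :
    x = u ∨ x = v ∨ 2 ≤ w.length := by
  cases w with
  | nil => simp at hx; tauto
  | cons h p =>
    cases p with
    | nil =>
      simp [SimpleGraph.Walk.support_cons] at hx
      tauto
    | cons h' p' =>
      right; right
      simp only [SimpleGraph.Walk.length_cons]
      omega

/-- No `t` parallel internally disjoint long paths between two connected branch sets. -/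
lemma no_parallel (t : ℕ)
    (hfree : ¬ H.HasMinor (completeBipartiteGraph (Fin 2) (Fin t)))
    (B₁ B₂ : Set V) (h1 : B₁.Nonempty) (h2 : B₂.Nonempty)
    (hc1 : (H.induce B₁).Connected) (hc2 : (H.induce B₂).Connected)
    (hd : Disjoint B₁ B₂)
    (f : Fin t → Σ u v : V, H.Walk u v) (hinj : Function.Injective f)
    (hpath : ∀ i, (f i).2.2.IsPath ∧ 2 ≤ (f i).2.2.length)
    (hends : ∀ i, ((f i).1 ∈ B₁ ∧ (f i).2.1 ∈ B₂) ∨ ((f i).1 ∈ B₂ ∧ (f i).2.1 ∈ B₁))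
    (havoid : ∀ i x, x ∈ intSet (f i) → x ∉ B₁ ∧ x ∉ B₂)
    (hdisj : ∀ i j, i ≠ j → Disjoint (intSet (f i)) (intSet (f j))) : False := by
  apply hfree
  refine ⟨Sum.elim (fun i => if i.val = 0 then B₁ else B₂) (fun j => intSet (f j)),
    ?_, ?_, ?_, ?_⟩
  · rintro (i | j)
    · simp only [Sum.elim_inl]
      by_cases hi : i.val = 0
      · rw [if_pos hi]; exact h1
      · rw [if_neg hi]; exact h2
    · obtain ⟨s, _, _, _, hs, _, _, _, _⟩ := intSet_spec (f j) (hpath j).1 (hpath j).2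
      exact ⟨s, hs⟩
  · rintro (i | j)
    · simp only [Sum.elim_inl]
      by_cases hi : i.val = 0
      · rw [if_pos hi]; exact hc1
      · rw [if_neg hi]; exact hc2
    · obtain ⟨_, _, _, _, _, _, hconn, _, _⟩ := intSet_spec (f j) (hpath j).1 (hpath j).2
      simpa using hconn
  · rintro (i | i) (j | j) hne
    · simp only [Sum.elim_inl]
      have : i ≠ j := fun h => hne (by rw [h])
      by_cases hi : i.val = 0 <;> by_cases hj : j.val = 0
      · exact absurd (Fin.ext (by omega)) this
      · simp [hi, hj, hd]
      · simp [hi, hj, hd.symm]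
      · exact absurd (Fin.ext (by omega)) this
    · simp only [Sum.elim_inl, Sum.elim_inr]
      rw [Set.disjoint_right]
      intro x hx
      by_cases hi : i.val = 0 <;> simp [hi, (havoid j x hx).1, (havoid j x hx).2]
    · simp only [Sum.elim_inl, Sum.elim_inr]
      rw [Set.disjoint_left]
      intro x hx
      by_cases hj : j.val = 0 <;> simp [hj, (havoid i x hx).1, (havoid i x hx).2]
    · simp only [Sum.elim_inr]
      exact hdisj i j (fun h => hne (by rw [h]))
  · rintro (i | i) (j | j) hadj
    case inl.inl => simp at hadj
    case inr.inr => simp at hadj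
    case inl.inr =>
      obtain ⟨s, s', hus, hsv, hs, hs', _, _, _⟩ := intSet_spec (f j) (hpath j).1 (hpath j).2
      simp only [Sum.elim_inl, Sum.elim_inr]
      by_cases hi : i.val = 0
      · rcases hends j with ⟨he1, _⟩ | ⟨_, he2⟩
        · exact ⟨(f j).1, by simp [hi, he1], s, hs, hus⟩
        · exact ⟨(f j).2.1, by simp [hi, he2], s', hs', hsv.symm⟩
      · rcases hends j with ⟨_, he2⟩ | ⟨he1, _⟩
        · exact ⟨(f j).2.1, by simp [hi, he2], s', hs', hsv.symm⟩
        · exact ⟨(f j).1, by simp [hi, he1], s, hs, hus⟩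
    case inr.inl =>
      obtain ⟨s, s', hus, hsv, hs, hs', _, _, _⟩ := intSet_spec (f i) (hpath i).1 (hpath i).2
      simp only [Sum.elim_inl, Sum.elim_inr]
      by_cases hj : j.val = 0
      · rcases hends i with ⟨he1, _⟩ | ⟨_, he2⟩
        · exact ⟨s, hs, (f i).1, by simp [hj, he1], hus.symm⟩
        · exact ⟨s', hs', (f i).2.1, by simp [hj, he2], hsv⟩
      · rcases hends i with ⟨_, he2⟩ | ⟨he1, _⟩
        · exact ⟨s', hs', (f i).2.1, by simp [hj, he2], hsv⟩
        · exact ⟨s, hs, (f i).1, by simp [hj, he1], hus.symm⟩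

end Aux

section Count

variable {V : Type*} [Fintype V] {H : SimpleGraph V}

lemma ncard_biUnion_le' {α : Type*} (s : Finset α) (f : α → Set V) :
    (⋃ i ∈ s, f i).ncard ≤ ∑ i ∈ s, (f i).ncard := by
  classical
  induction s using Finset.induction_on with
  | empty => simp
  | @insert a s ha ih =>
    rw [Finset.set_biUnion_insert, Finset.sum_insert ha]
    exact le_trans (Set.ncard_union_le _ _) (by omega)

lemma system_bound (t : ℕ) (ht : 2 ≤ t)
    (hfree : ¬ H.HasMinor (completeBipartiteGraph (Fin 2) (Fin t))) :
    ∀ (n : ℕ) (N : Finset (Set V)) (P : Finset (Σ u v : V, H.Walk u v)),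
      N.card = n →
      (∀ B ∈ N, B.Nonempty) →
      (∀ B ∈ N, (H.induce B).Connected) →
      (∀ B ∈ N, ∀ C ∈ N, B ≠ C → Disjoint B C) →
      (∀ p ∈ P, p.2.2.IsPath ∧ 2 ≤ p.2.2.length ∧
        ∃ B ∈ N, ∃ C ∈ N, B ≠ C ∧ p.1 ∈ B ∧ p.2.1 ∈ C) →
      (∀ p ∈ P, ∀ x ∈ intSet p, ∀ B ∈ N, x ∉ B) →
      (∀ p ∈ P, ∀ q ∈ P, p ≠ q → Disjoint (intSet p) (intSet q)) →
      P.card ≤ (t - 1) * n := by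
  intro n
  induction n with
  | zero =>
    intro N P hcard hN1 hN2 hN3 hP hPint hPdisj
    have hPe : P = ∅ := by
      refine Finset.eq_empty_of_forall_notMem (fun p hp => ?_)
      obtain ⟨-, -, B, hB, -⟩ := hP p hp
      rw [Finset.card_eq_zero] at hcard
      simp [hcard] at hB
    simp [hPe]
  | succ n ih =>
    intro N P hcard hN1 hN2 hN3 hP hPint hPdisj
    classical
    rcases P.eq_empty_or_nonempty with rfl | ⟨p, hp⟩
    · simp
    obtain ⟨hpath, hplen, B₁, hB₁, B₂, hB₂, hBne, hp1, hp2⟩ := hP p hp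
    set S := P.filter (fun q => (q.1 ∈ B₁ ∧ q.2.1 ∈ B₂) ∨ (q.1 ∈ B₂ ∧ q.2.1 ∈ B₁)) with hSdef
    have hSP : S ⊆ P := Finset.filter_subset _ _
    have hpS : p ∈ S := Finset.mem_filter.mpr ⟨hp, Or.inl ⟨hp1, hp2⟩⟩
    have hScard : S.card ≤ t - 1 := by
      by_contra hcon
      push_neg at hcon
      have htS : t ≤ S.card := by omega
      obtain ⟨T, hTS, hTcard⟩ := Finset.exists_subset_card_eq htS
      have e : {x // x ∈ T} ≃ Fin t :=
        Fintype.equivFinOfCardEq (by rw [Fintype.card_coe, hTcard])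
      set f : Fin t → Σ u v : V, H.Walk u v := fun i => (e.symm i : {x // x ∈ T}).val with hfdef
      have hfinj : Function.Injective f :=
        Subtype.val_injective.comp e.symm.injective
      have hfS : ∀ i, f i ∈ S := fun i => hTS (e.symm i).2
      have hfP : ∀ i, f i ∈ P := fun i => hSP (hfS i)
      refine no_parallel t hfree B₁ B₂ (hN1 _ hB₁) (hN1 _ hB₂) (hN2 _ hB₁) (hN2 _ hB₂)
        (hN3 _ hB₁ _ hB₂ hBne) f hfinj
        (fun i => ⟨(hP _ (hfP i)).1, (hP _ (hfP i)).2.1⟩)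
        (fun i => (Finset.mem_filter.mp (hfS i)).2) ?_ ?_
      · intro i x hx
        exact ⟨hPint _ (hfP i) x hx B₁ hB₁, hPint _ (hfP i) x hx B₂ hB₂⟩
      · intro i j hij
        exact hPdisj _ (hfP i) _ (hfP j) (hfinj.ne hij)
    -- the merged branch set
    set Sp : Set V := {x | x ∈ p.2.2.support} with hSpdef
    set M : Set V := B₁ ∪ Sp ∪ B₂ with hMdef
    set ee := (N.erase B₁).erase B₂ with heedef
    have hB₂e : B₂ ∈ N.erase B₁ := Finset.mem_erase.mpr ⟨Ne.symm hBne, hB₂⟩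
    have hee : ∀ C ∈ ee, C ∈ N ∧ C ≠ B₁ ∧ C ≠ B₂ := by
      intro C hC
      rw [Finset.mem_erase, Finset.mem_erase] at hC
      exact ⟨hC.2.2, hC.2.1, hC.1⟩
    have hB₁M : B₁ ⊆ M := fun x hx => Or.inl (Or.inl hx)
    have hB₂M : B₂ ⊆ M := fun x hx => Or.inr hx
    have hSpM : Sp ⊆ M := fun x hx => Or.inl (Or.inr hx)
    have hSpC : ∀ C ∈ ee, Disjoint Sp C := by
      intro C hC
      obtain ⟨hCN, hCB₁, hCB₂⟩ := hee C hC
      rw [Set.disjoint_left]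
      intro x hx
      rcases support_mem_cases hx with rfl | rfl | hxint
      · exact Set.disjoint_left.mp (hN3 _ hB₁ _ hCN (Ne.symm hCB₁)) hp1
      · exact Set.disjoint_left.mp (hN3 _ hB₂ _ hCN (Ne.symm hCB₂)) hp2
      · exact hPint p hp x hxint C hCN
    have hMC : ∀ C ∈ ee, Disjoint M C := by
      intro C hC
      obtain ⟨hCN, hCB₁, hCB₂⟩ := hee C hC
      rw [hMdef, Set.disjoint_union_left, Set.disjoint_union_left]
      exact ⟨⟨hN3 _ hB₁ _ hCN (Ne.symm hCB₁), hSpC C hC⟩, hN3 _ hB₂ _ hCN (Ne.symm hCB₂)⟩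
    have hMee : M ∉ ee := by
      intro hM
      obtain ⟨x, hx⟩ := hN1 _ hB₁
      exact Set.disjoint_left.mp (hMC M hM) (hB₁M hx) (hB₁M hx)
    set N' := insert M ee with hN'def
    have hcard' : N'.card = n := by
      have h1 : (N.erase B₁).card = n := by
        rw [Finset.card_erase_of_mem hB₁, hcard]
        omega
      have h2 : 1 ≤ (N.erase B₁).card := Finset.card_pos.mpr ⟨B₂, hB₂e⟩
      rw [hN'def, Finset.card_insert_of_notMem hMee, heedef,
        Finset.card_erase_of_mem hB₂e, h1]
      omega
    set P' := P \ S with hP'def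
    have hP'P : ∀ q ∈ P', q ∈ P ∧ q ∉ S := fun q hq => Finset.mem_sdiff.mp hq
    have hMN' : M ∈ N' := Finset.mem_insert_self _ _
    have heeN' : ∀ C ∈ ee, C ∈ N' := fun C hC => Finset.mem_insert_of_mem hC
    have hMneC : ∀ C ∈ ee, M ≠ C := by
      intro C hC h
      obtain ⟨x, hx⟩ := hN1 _ hB₁
      exact Set.disjoint_left.mp (hMC C hC) (hB₁M hx) (h ▸ hB₁M hx)
    -- invariants for the new system
    have hN1' : ∀ B ∈ N', B.Nonempty := by
      intro B hB
      rcases Finset.mem_insert.mp hB with rfl | hB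
      · obtain ⟨x, hx⟩ := hN1 _ hB₁; exact ⟨x, hB₁M hx⟩
      · exact hN1 _ (hee B hB).1
    have hN2' : ∀ B ∈ N', (H.induce B).Connected := by
      intro B hB
      rcases Finset.mem_insert.mp hB with rfl | hB
      · refine induce_connected_of_reach (x₀ := p.1) (hB₁M hp1) ?_
        intro y hy
        rcases hy with (hy | hy) | hy
        · exact (qreach_of_induce_connected (hN2 _ hB₁) hp1 hy).mono hB₁M
        · exact (qreach_support p.2.2 hy).mono hSpM
        · refine QReach.trans
            ((qreach_support p.2.2 p.2.2.end_mem_support).mono hSpM)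
            ((qreach_of_induce_connected (hN2 _ hB₂) hp2 hy).mono hB₂M)
      · exact hN2 _ (hee B hB).1
    have hN3' : ∀ B ∈ N', ∀ C ∈ N', B ≠ C → Disjoint B C := by
      intro B hB C hC hne
      rcases Finset.mem_insert.mp hB with rfl | hB <;>
        rcases Finset.mem_insert.mp hC with rfl | hC
      · exact absurd rfl hne
      · exact hMC C hC
      · exact (hMC B hB).symm
      · exact hN3 _ (hee B hB).1 _ (hee C hC).1 hne
    have hP4' : ∀ q ∈ P', q.2.2.IsPath ∧ 2 ≤ q.2.2.length ∧
        ∃ B ∈ N', ∃ C ∈ N', B ≠ C ∧ q.1 ∈ B ∧ q.2.1 ∈ C := by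
      intro q hq
      obtain ⟨hqP, hqS⟩ := hP'P q hq
      obtain ⟨h1, h2, B, hB, C, hC, hBC, hqB, hqC⟩ := hP q hqP
      refine ⟨h1, h2, ?_⟩
      by_cases hB12 : B = B₁ ∨ B = B₂ <;> by_cases hC12 : C = B₁ ∨ C = B₂
      · exfalso
        apply hqS
        refine Finset.mem_filter.mpr ⟨hqP, ?_⟩
        rcases hB12 with rfl | rfl <;> rcases hC12 with rfl | rfl
        · exact absurd rfl hBC
        · exact Or.inl ⟨hqB, hqC⟩
        · exact Or.inr ⟨hqB, hqC⟩
        · exact absurd rfl hBC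
      · push_neg at hC12
        have hCee : C ∈ ee := Finset.mem_erase.mpr ⟨hC12.2, Finset.mem_erase.mpr ⟨hC12.1, hC⟩⟩
        refine ⟨M, hMN', C, heeN' C hCee, hMneC C hCee, ?_, hqC⟩
        rcases hB12 with rfl | rfl
        · exact hB₁M hqB
        · exact hB₂M hqB
      · push_neg at hB12
        have hBee : B ∈ ee := Finset.mem_erase.mpr ⟨hB12.2, Finset.mem_erase.mpr ⟨hB12.1, hB⟩⟩
        refine ⟨B, heeN' B hBee, M, hMN', (hMneC B hBee).symm, hqB, ?_⟩
        rcases hC12 with rfl | rfl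
        · exact hB₁M hqC
        · exact hB₂M hqC
      · push_neg at hB12 hC12
        have hBee : B ∈ ee := Finset.mem_erase.mpr ⟨hB12.2, Finset.mem_erase.mpr ⟨hB12.1, hB⟩⟩
        have hCee : C ∈ ee := Finset.mem_erase.mpr ⟨hC12.2, Finset.mem_erase.mpr ⟨hC12.1, hC⟩⟩
        exact ⟨B, heeN' B hBee, C, heeN' C hCee, hBC, hqB, hqC⟩
    have hPint' : ∀ q ∈ P', ∀ x ∈ intSet q, ∀ B ∈ N', x ∉ B := by
      intro q hq x hx B hB
      obtain ⟨hqP, hqS⟩ := hP'P q hq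
      rcases Finset.mem_insert.mp hB with rfl | hB
      · rintro ((hxB | hxSp) | hxB)
        · exact hPint q hqP x hx B₁ hB₁ hxB
        · rcases support_mem_cases hxSp with heq | heq | hxint
          · exact hPint q hqP x hx B₁ hB₁ (heq ▸ hp1)
          · exact hPint q hqP x hx B₂ hB₂ (heq ▸ hp2)
          · have hqp : q ≠ p := fun h => hqS (h ▸ hpS)
            exact Set.disjoint_left.mp (hPdisj q hqP p hp hqp) hx hxint
        · exact hPint q hqP x hx B₂ hB₂ hxB
      · exact hPint q hqP x hx B (hee B hB).1
    have hPdisj' : ∀ q ∈ P', ∀ r ∈ P', q ≠ r → Disjoint (intSet q) (intSet r) :=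
      fun q hq r hr hne => hPdisj q (hP'P q hq).1 r (hP'P r hr).1 hne
    have hrec := ih N' P' hcard' hN1' hN2' hN3' hP4' hPint' hPdisj'
    have hsum : P'.card + S.card = P.card := Finset.card_sdiff_add_card_eq_card hSP
    have hmul : (t - 1) * (n + 1) = (t - 1) * n + (t - 1) := by ring
    omega

end Count

/-- Let `Pfam` be a maximal family of pairwise internally disjoint `Q`-paths of length at
most `h` in a `K_{2,t}`-minor-free graph (`t ≥ 2`).  Then the set `Q'` of vertices on
paths of `Pfam` satisfies `|Q'| ≤ (t+1)²(h+1)|Q|/2`, and every `Q`-path of length at most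
`h` not in `Pfam` contains an internal vertex of some path of `Pfam`. -/
theorem maximal_qPath_family {V : Type*} [Fintype V]
    (t h : ℕ) (ht : 2 ≤ t) (H : SimpleGraph V)
    (hfree : ¬ H.HasMinor (completeBipartiteGraph (Fin 2) (Fin t)))
    (Q : Set V) (Pfam : Set (Σ u v : V, H.Walk u v))
    (hP : ∀ p ∈ Pfam, IsQPathOf H Q h p)
    (hPdisj : ∀ p ∈ Pfam, ∀ q ∈ Pfam, p ≠ q → IntDisj p q)
    (hPmax : ∀ p ∉ Pfam, IsQPathOf H Q h p → ∃ q ∈ Pfam, ¬ IntDisj p q) :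
    2 * {x : V | ∃ p ∈ Pfam, x ∈ p.2.2.support}.ncard ≤ (t + 1) ^ 2 * (h + 1) * Q.ncard ∧
    ∀ p ∉ Pfam, IsQPathOf H Q h p →
      ∃ q ∈ Pfam, ∃ x ∈ p.2.2.support, x ∈ q.2.2.support ∧ x ≠ q.1 ∧ x ≠ q.2.1 := by
  classical
  constructor
  · -- the counting statement
    set Q' := {x : V | ∃ p ∈ Pfam, x ∈ p.2.2.support} with hQ'def
    set Plong : Set (Σ u v : V, H.Walk u v) := {p ∈ Pfam | 2 ≤ p.2.2.length} with hPlongdef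
    have hint_disj : ∀ p ∈ Pfam, ∀ q ∈ Pfam, p ≠ q → Disjoint (intSet p) (intSet q) := by
      intro p hp q hq hne
      rw [Set.disjoint_left]
      intro x hxp hxq
      obtain ⟨h1, -⟩ := hPdisj p hp q hq hne x hxp.1 hxq.1
      rcases h1 with h | h
      · exact hxp.2.1 h
      · exact hxp.2.2 h
    have hne_int : ∀ p ∈ Plong, (intSet p).Nonempty := by
      intro p hp
      obtain ⟨s, -, -, -, hs, -⟩ := intSet_spec p (hP p hp.1).1 hp.2
      exact ⟨s, hs⟩
    have hfin : Plong.Finite := by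
      have hinj : Set.InjOn
          (fun p => if hne : (intSet p).Nonempty then hne.choose else p.1) Plong := by
        intro p hp q hq hpq
        by_contra hne
        have h1 := hne_int p hp
        have h2 := hne_int q hq
        simp only [dif_pos h1, dif_pos h2] at hpq
        exact Set.disjoint_left.mp (hint_disj p hp.1 q hq.1 hne)
          (hpq ▸ h1.choose_spec) h2.choose_spec
      exact Set.Finite.of_finite_image (Set.toFinite _) hinj
    set PF := hfin.toFinset with hPFdef
    have hPFmem : ∀ p, p ∈ PF ↔ p ∈ Plong := fun p => hfin.mem_toFinset
    set Qfin := Q.toFinite.toFinset with hQfindef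
    set NQ := Qfin.image (fun q : V => ({q} : Set V)) with hNQdef
    have hNQcard : NQ.card = Q.ncard := by
      rw [hNQdef, Finset.card_image_of_injective _ Set.singleton_injective,
        ← Set.ncard_coe_finset, hQfindef, Set.Finite.coe_toFinset]
    have hNQmem : ∀ B ∈ NQ, ∃ q ∈ Q, B = {q} := by
      intro B hB
      obtain ⟨q, hq, rfl⟩ := Finset.mem_image.mp hB
      exact ⟨q, (Set.Finite.mem_toFinset _).mp hq, rfl⟩
    have hsingNQ : ∀ q ∈ Q, ({q} : Set V) ∈ NQ := by
      intro q hq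
      exact Finset.mem_image.mpr ⟨q, (Set.Finite.mem_toFinset _).mpr hq, rfl⟩
    have hLbound : PF.card ≤ (t - 1) * NQ.card := by
      refine system_bound t ht hfree NQ.card NQ PF rfl ?_ ?_ ?_ ?_ ?_ ?_
      · intro B hB
        obtain ⟨q, -, rfl⟩ := hNQmem B hB
        exact ⟨q, rfl⟩
      · intro B hB
        obtain ⟨q, -, rfl⟩ := hNQmem B hB
        refine induce_connected_of_reach (x₀ := q) rfl ?_
        rintro y rfl
        exact ⟨SimpleGraph.Walk.nil, by simp⟩
      · intro B hB C hC hne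
        obtain ⟨q, -, rfl⟩ := hNQmem B hB
        obtain ⟨r, -, rfl⟩ := hNQmem C hC
        rw [Set.disjoint_left]
        rintro x rfl hx
        exact hne (by rw [hx])
      · intro p hp
        rw [hPFmem] at hp
        have hQp := hP p hp.1
        have hne := path_ne_of_two_le_length p hQp.1 hp.2
        refine ⟨hQp.1, hp.2, {p.1}, hsingNQ _ hQp.2.1, {p.2.1}, hsingNQ _ hQp.2.2.1,
          fun hcon => hne (Set.singleton_injective hcon), rfl, rfl⟩
      · intro p hp x hx B hB
        rw [hPFmem] at hp
        obtain ⟨q, hqQ, rfl⟩ := hNQmem B hB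
        rintro rfl
        rcases (hP p hp.1).2.2.2.1 x hx.1 hqQ with heq | heq
        · exact hx.2.1 heq
        · exact hx.2.2 heq
      · intro p hp q hq hne
        rw [hPFmem] at hp hq
        exact hint_disj p hp.1 q hq.1 hne
    set I : Set V := ⋃ p ∈ PF, intSet p with hIdef
    have hIbound : I.ncard ≤ PF.card * (h - 1) := by
      refine le_trans (ncard_biUnion_le' PF intSet) ?_
      have hstep : ∀ p ∈ PF, (intSet p).ncard ≤ h - 1 := by
        intro p hp
        rw [hPFmem] at hp
        have hQp := hP p hp.1
        obtain ⟨-, -, -, -, -, -, -, hcard, -⟩ := intSet_spec p hQp.1 hp.2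
        have := hQp.2.2.2.2
        omega
      calc ∑ p ∈ PF, (intSet p).ncard ≤ PF.card • (h - 1) :=
            Finset.sum_le_card_nsmul _ _ _ hstep
        _ = PF.card * (h - 1) := by rw [smul_eq_mul]
    have hQ'sub : Q' ⊆ Q ∪ I := by
      rintro x ⟨p, hpf, hx⟩
      rcases support_mem_cases hx with heq | heq | hxint
      · exact Or.inl (heq ▸ (hP p hpf).2.1)
      · exact Or.inl (heq ▸ (hP p hpf).2.2.1)
      · have hlong : 2 ≤ p.2.2.length := by
          rcases support_short_cases p.2.2 hx with heq | heq | hl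
          · exact absurd heq hxint.2.1
          · exact absurd heq hxint.2.2
          · exact hl
        have hpPF : p ∈ PF := (hPFmem p).mpr ⟨hpf, hlong⟩
        exact Or.inr (Set.mem_biUnion hpPF hxint)
    have hQ'card : Q'.ncard ≤ Q.ncard + I.ncard :=
      le_trans (Set.ncard_le_ncard hQ'sub (Set.toFinite _)) (Set.ncard_union_le _ _)
    -- arithmetic
    have hI2 : I.ncard ≤ (t + 1) * (h + 1) * Q.ncard := by
      have e1 : PF.card * (h - 1) ≤ ((t - 1) * Q.ncard) * (h - 1) := by
        rw [hNQcard] at hLbound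
        exact Nat.mul_le_mul_right _ hLbound
      have e2 : ((t - 1) * Q.ncard) * (h - 1) ≤ ((t + 1) * Q.ncard) * (h + 1) :=
        Nat.mul_le_mul (Nat.mul_le_mul_right _ (by omega)) (by omega)
      have e3 : ((t + 1) * Q.ncard) * (h + 1) = (t + 1) * (h + 1) * Q.ncard := by ring
      omega
    have hscalar : 2 + 2 * ((t + 1) * (h + 1)) ≤ (t + 1) ^ 2 * (h + 1) := by
      have k1 : 3 * 1 ≤ (t + 1) * (h + 1) := Nat.mul_le_mul (by omega) (by omega)
      have k2 : 3 * ((t + 1) * (h + 1)) ≤ (t + 1) * ((t + 1) * (h + 1)) :=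
        Nat.mul_le_mul_right _ (by omega)
      have k3 : (t + 1) * ((t + 1) * (h + 1)) = (t + 1) ^ 2 * (h + 1) := by ring
      omega
    calc 2 * Q'.ncard ≤ 2 * (Q.ncard + (t + 1) * (h + 1) * Q.ncard) := by omega
      _ = (2 + 2 * ((t + 1) * (h + 1))) * Q.ncard := by ring
      _ ≤ ((t + 1) ^ 2 * (h + 1)) * Q.ncard := Nat.mul_le_mul_right _ hscalar
  · -- the maximality statement
    intro p hpnot hQp
    obtain ⟨q, hq, hnd⟩ := hPmax p hpnot hQp
    rw [IntDisj] at hnd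
    push_neg at hnd
    obtain ⟨x, hxp, hxq, hcon⟩ := hnd
    refine ⟨q, hq, x, hxp, hxq, ?_, ?_⟩
    · intro heq
      have hxQ : x ∈ Q := heq ▸ (hP q hq).2.1
      exact (hcon (hQp.2.2.2.1 x hxp hxQ)).1 heq
    · intro heq
      have hxQ : x ∈ Q := heq ▸ (hP q hq).2.2.1
      exact (hcon (hQp.2.2.2.1 x hxp hxQ)).2 heq
end
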